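/- Let G, H, K be finite groups, let (U,α,V) ∈ E_{G,H} and (V',β,W) ∈ E_{H,K}. (a) If V and V' are not H-conjugate then [U,α,V]⁺_{G×H} ·_H [V',β,W]⁺_{H×K} = 0 in ℚA(G,K). (b) If V = V' then [U,α,V]⁺_{G×H} ·_H [V,β,W]⁺_{H×K} = Σ_{(g,h,k) ∈ 𝒜×ℬ×𝒞} ⁽ᵍ'ᵏ⁾(U, α∘c_h⁻¹∘β, W), where 𝒜 ⊆ G is a transversal for G/p₁(N_{G×H}(⊲(U,α,V))), ℬ ⊆ N_H(V) is a transversal for N_H(V)/C_H(ker(α),V), and 𝒞 ⊆ K is a transversal for K/p₂(N_{H×K}(⊲(V,β,W))); moreover the right-hand side is independent of the choice of 𝒜, ℬ, 𝒞, and it is an element of A(G,K) fixed by the G×K-action. -/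

import Mathlib

open scoped Classical

/-- The set `E_{G,H}` of triples `(U,α,V)` with `V ≤ H`, `U ≤ G` and
`α : V → U` a surjective homomorphism, encoded as pairs of a subgroup `V ≤ H`
and a homomorphism `α : ↥V →* G` (so that `U = α.range`). -/
abbrev TriE (G H : Type*) [Group G] [Group H] := (V : Subgroup H) × (↥V →* G)

/-- The graph subgroup `⊲(U,α,V) = {(α v, v) : v ∈ V} ≤ G × H` of a triple.
Triples are `G × H`-conjugate iff their graphs are conjugate. -/
def lhdOf {G H : Type*} [Group G] [Group H] (t : TriE G H) : Subgroup (G × H) :=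
  (t.2.prod t.1.subtype).range

/-- The ghost-algebra product `ℚA(G,H) × ℚA(H,K) → ℚA(G,K)`, given on basis
elements by `(U,α,V)·(V',β,W) = 0` if `V ≠ V'` and by
`(|C_H(V)|/|H|)·(U,α∘β,W)` if `V = V'`; elements of `ℚA` are represented by
their coefficient functions on the basis `TriE`. -/
noncomputable def ghostMul {G H K : Type*} [Group G] [Group H] [Group K]
    (a : TriE G H → ℚ) (b : TriE H K → ℚ) : TriE G K → ℚ :=
  fun r => ∑ᶠ (s : TriE G H), ∑ᶠ (t : TriE H K),
    if h : t.2.range = s.1 then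
      (if r = ⟨t.1, s.2.comp (t.2.codRestrict s.1
            (fun w => h ▸ MonoidHom.mem_range.mpr ⟨w, rfl⟩))⟩ then
        ((Nat.card ↥(Subgroup.centralizer ((s.1 : Subgroup H) : Set H)) : ℚ) /
          (Nat.card H : ℚ)) * a s * b t
      else 0)
    else 0

/-- The orbit sum `[U,α,V]⁺` (sum of the `G × H`-conjugates of the basis
element `(U,α,V)`), as a coefficient function: the indicator function of the
conjugation orbit of the triple `t`, detected via graphs. -/
noncomputable def orbSum {G H : Type*} [Group G] [Group H] (t : TriE G H) :
    TriE G H → ℚ :=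
  fun s => if ∃ a : G × H,
    Subgroup.map (MulAut.conj a).toMonoidHom (lhdOf t) = lhdOf s then 1 else 0

/-- Composition of relations: `L * M = {(g,k) | ∃ h, (g,h) ∈ L ∧ (h,k) ∈ M}`. -/
def starSub {G H K : Type*} [Group G] [Group H] [Group K]
    (L : Subgroup (G × H)) (M : Subgroup (H × K)) : Subgroup (G × K) where
  carrier := {x | ∃ h : H, (x.1, h) ∈ L ∧ (h, x.2) ∈ M}
  one_mem' := ⟨1, L.one_mem, M.one_mem⟩
  mul_mem' := by
    rintro a b ⟨h, hL, hM⟩ ⟨h', hL', hM'⟩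
    exact ⟨h * h', mul_mem hL hL', mul_mem hM hM'⟩
  inv_mem' := by
    rintro a ⟨h, hL, hM⟩
    exact ⟨h⁻¹, inv_mem hL, inv_mem hM⟩

/-- The right hand side of the product formula in Lemma 4.6(b): the sum over
`(g,h,k) ∈ 𝒜 × ℬ × 𝒞` of the basis elements `⁽ᵍ'ᵏ⁾(U, α∘c_{h⁻¹}∘β, W)`; the
triple `(U, α∘c_{h⁻¹}∘β, W)` is detected via its graph, which equals
`⊲(U,α,V) * ⁽⁽ʰ⁻¹'¹⁾⁾⊲(V,β,W)`. -/
noncomputable def rhs9 {G H K : Type*} [Group G] [Group H] [Group K]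
    (s : TriE G H) (t : TriE H K)
    (A : Finset G) (B : Finset H) (C : Finset K) : TriE G K → ℚ :=
  fun r => ∑ g ∈ A, ∑ h ∈ B, ∑ k ∈ C,
    if lhdOf r = Subgroup.map (MulAut.conj ((g, k) : G × K)).toMonoidHom
        (starSub (lhdOf s)
          (Subgroup.map (MulAut.conj ((h⁻¹, (1 : K)) : H × K)).toMonoidHom (lhdOf t)))
    then 1 else 0

/-- Admissibility of the triple of transversals `(𝒜, ℬ, 𝒞)`:
`𝒜 ⊆ G` is a transversal for `G/p₁(N_{G×H}(⊲(U,α,V)))`, `ℬ ⊆ N_H(V)` is a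
transversal for `N_H(V)/C_H(ker α, V)`, and `𝒞 ⊆ K` is a transversal for
`K/p₂(N_{H×K}(⊲(V,β,W)))`. -/
def isChoice {G H K : Type*} [Group G] [Group H] [Group K]
    (s : TriE G H) (t : TriE H K) (A : Finset G) (B : Finset H) (C : Finset K) : Prop :=
  (∀ g : G, ∃! x, x ∈ A ∧
    g⁻¹ * x ∈ Subgroup.map (MonoidHom.fst G H) (Subgroup.normalizer ((lhdOf s : Set (G × H))))) ∧
  (∀ b ∈ B, b ∈ Subgroup.normalizer (s.1 : Set H)) ∧
  (∀ n ∈ Subgroup.normalizer (s.1 : Set H), ∃! x, x ∈ B ∧ n⁻¹ * x ∈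
    {h : H | h ∈ Subgroup.normalizer ((s.2.ker.map s.1.subtype : Subgroup H) : Set H) ∧ h ∈ Subgroup.normalizer (s.1 : Set H) ∧
      ∀ v ∈ s.1, h * v * h⁻¹ * v⁻¹ ∈ s.2.ker.map s.1.subtype}) ∧
  (∀ k : K, ∃! x, x ∈ C ∧
    k⁻¹ * x ∈ Subgroup.map (MonoidHom.snd H K) (Subgroup.normalizer ((lhdOf t : Set (H × K)))))

noncomputable instance MonoidHom.finite' {M N : Type*} [Monoid M] [Monoid N] [Finite M] [Finite N] :
    Finite (M →* N) := Finite.of_injective (fun f => (f : M → N)) DFunLike.coe_injective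

example {H G : Type*} [Group H] [Group G] [Finite H] [Finite G] : Finite (TriE G H) := inferInstance

section cj
variable {M : Type*} [Group M]

private lemma ccj (a x : M) : a * (a⁻¹ * x * a) * a⁻¹ = x := by group

def cj (a : M) (L : Subgroup M) : Subgroup M := Subgroup.map (MulAut.conj a).toMonoidHom L

lemma mem_cj {a x : M} {L : Subgroup M} : x ∈ cj a L ↔ a⁻¹ * x * a ∈ L := by
  rw [cj, Subgroup.mem_map_equiv, MulAut.conj_symm_apply]

lemma cj_cj (a b : M) (L : Subgroup M) : cj a (cj b L) = cj (a * b) L := by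
  ext x; simp [mem_cj, mul_assoc]

lemma cj_one (L : Subgroup M) : cj 1 L = L := by ext x; simp [mem_cj]

lemma cj_eq_of_mem_normalizer {a : M} {L : Subgroup M} (h : a ∈ (Subgroup.normalizer (SetLike.coe L))) :
    cj a L = L := by
  rw [Subgroup.mem_normalizer_iff] at h
  ext x
  rw [mem_cj]
  constructor
  · intro hx
    have := (h _).mp hx
    rwa [ccj] at this
  · intro hx
    refine (h _).mpr ?_
    rwa [ccj]

lemma mem_normalizer_of_cj_eq {a : M} {L : Subgroup M} (h : cj a L = L) :
    a ∈ (Subgroup.normalizer (SetLike.coe L)) := by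
  rw [Subgroup.mem_normalizer_iff]
  intro x
  constructor
  · intro hx
    rw [← h, mem_cj]
    have : a⁻¹ * (a * x * a⁻¹) * a = x := by group
    rwa [this]
  · intro hx
    rw [← h, mem_cj] at hx
    have : a⁻¹ * (a * x * a⁻¹) * a = x := by group
    rwa [this] at hx

lemma cj_inj {a : M} {L L' : Subgroup M} (h : cj a L = cj a L') : L = L' := by
  have := congrArg (cj a⁻¹) h
  rwa [cj_cj, cj_cj, inv_mul_cancel, cj_one, cj_one] at this
end cj

section lhd
variable {G H K : Type*} [Group G] [Group H] [Group K]

lemma mem_lhd {s : TriE G H} {p : G} {q : H} :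
    (p, q) ∈ lhdOf s ↔ ∃ h : q ∈ s.1, s.2 ⟨q, h⟩ = p := by
  constructor
  · rintro ⟨v, hv⟩
    rw [MonoidHom.prod_apply, Prod.mk.injEq] at hv
    obtain ⟨h1, h2⟩ := hv
    refine ⟨by rw [← h2]; exact v.2, ?_⟩
    have : (⟨q, by rw [← h2]; exact v.2⟩ : ↥s.1) = v := by
      apply Subtype.ext; simp [← h2]
    rw [this, h1]
  · rintro ⟨h, hv⟩
    exact ⟨⟨q, h⟩, by rw [MonoidHom.prod_apply]; simp [hv]⟩

lemma lhd_fun {s : TriE G H} {p p' : G} {q : H} (h : (p, q) ∈ lhdOf s)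
    (h' : (p', q) ∈ lhdOf s) : p = p' := by
  rw [mem_lhd] at h h'
  obtain ⟨h1, h2⟩ := h; obtain ⟨h1', h2'⟩ := h'
  rw [← h2, ← h2']

lemma lhd_inj {s s' : TriE G H} (h : lhdOf s = lhdOf s') : s = s' := by
  obtain ⟨V, α⟩ := s; obtain ⟨V', α'⟩ := s'
  have hV : V = V' := by
    ext v
    constructor
    · intro hv
      have : ((α ⟨v, hv⟩ : G), v) ∈ lhdOf (⟨V', α'⟩ : TriE G H) := by
        rw [← h, mem_lhd]; exact ⟨hv, rfl⟩
      rw [mem_lhd] at this; exact this.1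
    · intro hv
      have : ((α' ⟨v, hv⟩ : G), v) ∈ lhdOf (⟨V, α⟩ : TriE G H) := by
        rw [h, mem_lhd]; exact ⟨hv, rfl⟩
      rw [mem_lhd] at this; exact this.1
  subst hV
  have hα : α = α' := by
    ext v
    have : ((α v : G), (v : H)) ∈ lhdOf (⟨V, α'⟩ : TriE G H) := by
      rw [← h, mem_lhd]; exact ⟨v.2, rfl⟩
    rw [mem_lhd] at this
    obtain ⟨h1, h2⟩ := this
    rw [← h2]
  rw [hα]

lemma map_snd_lhd (s : TriE G H) :
    Subgroup.map (MonoidHom.snd G H) (lhdOf s) = s.1 := by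
  ext q
  simp only [Subgroup.mem_map]
  constructor
  · rintro ⟨⟨p, q'⟩, hx, he⟩
    have : q' = q := he
    subst this
    exact (mem_lhd.mp hx).1
  · intro hq
    exact ⟨(s.2 ⟨q, hq⟩, q), mem_lhd.mpr ⟨hq, rfl⟩, rfl⟩

lemma map_fst_lhd (t : TriE H K) :
    Subgroup.map (MonoidHom.fst H K) (lhdOf t) = t.2.range := by
  ext p
  simp only [Subgroup.mem_map, MonoidHom.mem_range]
  constructor
  · rintro ⟨⟨p', q⟩, hx, he⟩
    have : p' = p := he
    subst this
    obtain ⟨h1, h2⟩ := mem_lhd.mp hx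
    exact ⟨⟨q, h1⟩, h2⟩
  · rintro ⟨w, rfl⟩
    exact ⟨(t.2 w, w), mem_lhd.mpr ⟨w.2, rfl⟩, rfl⟩

private lemma snd_comp_conj (a : G × H) :
    (MonoidHom.snd G H).comp (MulAut.conj a).toMonoidHom
      = (MulAut.conj a.2).toMonoidHom.comp (MonoidHom.snd G H) := by
  ext x; rfl

private lemma fst_comp_conj (a : G × H) :
    (MonoidHom.fst G H).comp (MulAut.conj a).toMonoidHom
      = (MulAut.conj a.1).toMonoidHom.comp (MonoidHom.fst G H) := by
  ext x; rfl

lemma map_snd_cj (a : G × H) (L : Subgroup (G × H)) :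
    Subgroup.map (MonoidHom.snd G H) (cj a L) = cj a.2 (Subgroup.map (MonoidHom.snd G H) L) := by
  rw [cj, cj, Subgroup.map_map, Subgroup.map_map, snd_comp_conj]

lemma map_fst_cj (a : G × H) (L : Subgroup (G × H)) :
    Subgroup.map (MonoidHom.fst G H) (cj a L) = cj a.1 (Subgroup.map (MonoidHom.fst G H) L) := by
  rw [cj, cj, Subgroup.map_map, Subgroup.map_map, fst_comp_conj]

lemma mem_starSub {L : Subgroup (G × H)} {M : Subgroup (H × K)} {x : G × K} :
    x ∈ starSub L M ↔ ∃ h : H, (x.1, h) ∈ L ∧ (h, x.2) ∈ M := Iff.rfl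

lemma mem_cj_prod {a : G × H} {x : G × H} {L : Subgroup (G × H)} :
    x ∈ cj a L ↔ (a.1⁻¹ * x.1 * a.1, a.2⁻¹ * x.2 * a.2) ∈ L := by
  rw [mem_cj]; rfl

/-- master conjugation identity for starSub -/
lemma starSub_cj (L : Subgroup (G × H)) (M : Subgroup (H × K)) (a : G × H) (b : H × K) :
    starSub (cj a L) (cj b M)
      = cj (a.1, b.2) (starSub L (cj (a.2⁻¹ * b.1, (1 : K)) M)) := by
  ext ⟨p, q⟩
  rw [mem_cj_prod]
  simp only [mem_starSub, mem_cj_prod]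
  constructor
  · rintro ⟨y, h1, h2⟩
    refine ⟨a.2⁻¹ * y * a.2, h1, ?_⟩
    convert h2 using 2 <;> group
  · rintro ⟨y, h1, h2⟩
    refine ⟨a.2 * y * a.2⁻¹, by simpa [mul_assoc] using h1, ?_⟩
    convert h2 using 2 <;> group
end lhd

section act
variable {G H K : Type*} [Group G] [Group H] [Group K]

/-- conjugation action of `G × H` on triples -/
def cAct (a : G × H) (s : TriE G H) : TriE G H :=
  ⟨Subgroup.map (MulAut.conj a.2).toMonoidHom s.1,
    ((MulAut.conj a.1).toMonoidHom.comp s.2).comp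
      (((MulAut.conj a.2).subgroupMap s.1).symm.toMonoidHom)⟩

lemma cAct_fst (a : G × H) (s : TriE G H) : (cAct a s).1 = cj a.2 s.1 := rfl

lemma mem_cAct_fst {a : G × H} {s : TriE G H} {q : H} :
    q ∈ (cAct a s).1 ↔ a.2⁻¹ * q * a.2 ∈ s.1 := by
  rw [cAct_fst, mem_cj]

lemma cAct_apply (a : G × H) (s : TriE G H) (q : H) (hq : q ∈ (cAct a s).1)
    (hq' : a.2⁻¹ * q * a.2 ∈ s.1) :
    (cAct a s).2 ⟨q, hq⟩ = a.1 * s.2 ⟨a.2⁻¹ * q * a.2, hq'⟩ * a.1⁻¹ := by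
  show (MulAut.conj a.1) (s.2 (((MulAut.conj a.2).subgroupMap s.1).symm ⟨q, hq⟩)) = _
  rw [MulAut.conj_apply]
  have : (((MulAut.conj a.2).subgroupMap s.1).symm ⟨q, hq⟩ : ↥s.1) = ⟨a.2⁻¹ * q * a.2, hq'⟩ := by
    apply Subtype.ext
    rw [MulEquiv.subgroupMap_symm_apply]
    exact MulAut.conj_symm_apply a.2 q
  rw [this]

lemma lhd_cAct (a : G × H) (s : TriE G H) : lhdOf (cAct a s) = cj a (lhdOf s) := by
  ext ⟨p, q⟩
  rw [mem_lhd, mem_cj_prod, mem_lhd]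
  constructor
  · rintro ⟨hq, hv⟩
    have hq' : a.2⁻¹ * q * a.2 ∈ s.1 := mem_cAct_fst.mp hq
    refine ⟨hq', ?_⟩
    rw [← hv, cAct_apply a s q hq hq']
    group
  · rintro ⟨hq', hv⟩
    have hq : q ∈ (cAct a s).1 := mem_cAct_fst.mpr hq'
    refine ⟨hq, ?_⟩
    rw [cAct_apply a s q hq hq', hv]
    group

lemma cAct_mul (a b : G × H) (s : TriE G H) : cAct (a * b) s = cAct a (cAct b s) := by
  apply lhd_inj
  rw [lhd_cAct, lhd_cAct, lhd_cAct, cj_cj]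

lemma cAct_one (s : TriE G H) : cAct 1 s = s := by
  apply lhd_inj
  rw [lhd_cAct, cj_one]

lemma cAct_eq_self_iff {a : G × H} {s : TriE G H} :
    cAct a s = s ↔ a ∈ (Subgroup.normalizer (SetLike.coe (lhdOf s))) := by
  constructor
  · intro h
    apply mem_normalizer_of_cj_eq
    rw [← lhd_cAct, h]
  · intro h
    apply lhd_inj
    rw [lhd_cAct, cj_eq_of_mem_normalizer h]

lemma cAct_cancel {a : G × H} {s s' : TriE G H} (h : cAct a s = cAct a s') : s = s' := by
  have := congrArg (cAct a⁻¹) h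
  rwa [← cAct_mul, ← cAct_mul, inv_mul_cancel, cAct_one, cAct_one] at this

/-- the composite triple has graph `starSub` of the graphs -/
lemma lhd_comp (s' : TriE G H) (t' : TriE H K) (pf : ∀ w, t'.2 w ∈ s'.1) :
    lhdOf (⟨t'.1, s'.2.comp (t'.2.codRestrict s'.1 pf)⟩ : TriE G K)
      = starSub (lhdOf s') (lhdOf t') := by
  ext ⟨p, q⟩
  rw [mem_lhd]
  simp only [mem_starSub]
  constructor
  · rintro ⟨hq, hv⟩
    exact ⟨t'.2 ⟨q, hq⟩, mem_lhd.mpr ⟨pf _, hv⟩, mem_lhd.mpr ⟨hq, rfl⟩⟩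
  · rintro ⟨y, h1, h2⟩
    obtain ⟨hy, hv1⟩ := mem_lhd.mp h1
    obtain ⟨hq, hv2⟩ := mem_lhd.mp h2
    refine ⟨hq, ?_⟩
    show s'.2 ⟨t'.2 ⟨q, hq⟩, pf _⟩ = p
    rw [← hv1]
    congr 1
    apply Subtype.ext
    exact hv2
end act

section memb
variable {G H K : Type*} [Group G] [Group H] [Group K]

lemma centralizer_comm' {V : Subgroup H} {δ v : H}
    (hδ : δ ∈ Subgroup.centralizer (V : Set H)) (hv : v ∈ V) : δ⁻¹ * v * δ = v := by
  rw [Subgroup.mem_centralizer_iff] at hδ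
  rw [mul_assoc, hδ v hv, inv_mul_cancel_left]

lemma cj_centralizer (h : H) (V : Subgroup H) :
    cj h (Subgroup.centralizer (V : Set H)) = Subgroup.centralizer ((cj h V : Subgroup H) : Set H) := by
  ext x
  rw [mem_cj, Subgroup.mem_centralizer_iff, Subgroup.mem_centralizer_iff]
  constructor
  · intro hx g' hg'
    have hg'' : h⁻¹ * g' * h ∈ V := mem_cj.mp hg'
    have h1 := hx (h⁻¹ * g' * h) hg''
    have h2 := congrArg (fun z => h * z * h⁻¹) h1
    simp only [mul_assoc] at h2 ⊢
    simpa [← mul_assoc, mul_assoc] using h2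
  · intro hx g hg
    have hmem : (h * g * h⁻¹) ∈ cj h V := mem_cj.mpr (by simpa [mul_assoc] using hg)
    have h1 := hx (h * g * h⁻¹) hmem
    have h2 := congrArg (fun z => h⁻¹ * z * h) h1
    simpa [← mul_assoc, mul_assoc] using h2

lemma card_cj (h : H) (L : Subgroup H) : Nat.card (cj h L) = Nat.card L :=
  (Nat.card_congr ((MulAut.conj h).subgroupMap L).toEquiv).symm

lemma card_centralizer_cj (h : H) (V : Subgroup H) :
    Nat.card (Subgroup.centralizer ((cj h V : Subgroup H) : Set H))
      = Nat.card (Subgroup.centralizer (V : Set H)) := by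
  rw [← cj_centralizer, card_cj]

variable {s : TriE G H} {t : TriE H K}

lemma snd_mem_normalizer {x : G} {y : H} (h : (x, y) ∈ (Subgroup.normalizer (SetLike.coe (lhdOf s)))) :
    y ∈ (Subgroup.normalizer (SetLike.coe s.1)) := by
  have h1 : cj (x, y) (lhdOf s) = lhdOf s := cj_eq_of_mem_normalizer h
  have h2 := congrArg (Subgroup.map (MonoidHom.snd G H)) h1
  rw [map_snd_cj, map_snd_lhd] at h2
  exact mem_normalizer_of_cj_eq h2

lemma fst_mem_normalizer_t (hV : t.2.range = s.1) {u : H} {w : K}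
    (h : (u, w) ∈ (Subgroup.normalizer (SetLike.coe (lhdOf t)))) : u ∈ (Subgroup.normalizer (SetLike.coe s.1)) := by
  have h1 : cj (u, w) (lhdOf t) = lhdOf t := cj_eq_of_mem_normalizer h
  have h2 := congrArg (Subgroup.map (MonoidHom.fst H K)) h1
  rw [map_fst_cj, map_fst_lhd, hV] at h2
  exact mem_normalizer_of_cj_eq h2

lemma centralizer_one_mem_Ns {δ : H} (hδ : δ ∈ Subgroup.centralizer (s.1 : Set H)) :
    ((1 : G), δ) ∈ (Subgroup.normalizer (SetLike.coe (lhdOf s))) := by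
  apply mem_normalizer_of_cj_eq
  ext ⟨p, q⟩
  rw [mem_cj_prod]
  simp only [inv_one, one_mul, mul_one]
  constructor
  · intro h1
    have hv : δ⁻¹ * q * δ ∈ s.1 := (mem_lhd.mp h1).1
    have e1 : δ * (δ⁻¹ * q * δ) * δ⁻¹ = q := by group
    have e2 : δ⁻¹⁻¹ * (δ⁻¹ * q * δ) * δ⁻¹ = δ⁻¹ * q * δ := centralizer_comm' (inv_mem hδ) hv
    rw [inv_inv] at e2
    rw [e1] at e2
    rw [e2]
    exact h1
  · intro h1
    have hq : q ∈ s.1 := (mem_lhd.mp h1).1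
    rwa [centralizer_comm' hδ hq]

lemma mem_kerMap {x : H} : x ∈ s.2.ker.map s.1.subtype ↔ ∃ hx : x ∈ s.1, s.2 ⟨x, hx⟩ = 1 := by
  simp only [Subgroup.mem_map, MonoidHom.mem_ker]
  constructor
  · rintro ⟨v, hv, rfl⟩
    refine ⟨v.2, ?_⟩
    show s.2 ⟨↑v, v.2⟩ = 1
    rw [Subtype.coe_eta]
    exact hv
  · rintro ⟨hx, hv⟩
    exact ⟨⟨x, hx⟩, hv, rfl⟩

lemma one_mem_Ns_iff {δ : H} :
    ((1 : G), δ) ∈ (Subgroup.normalizer (SetLike.coe (lhdOf s)))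
      ↔ (δ ∈ (Subgroup.normalizer (SetLike.coe s.1)) ∧ ∀ (q : H) (hq : q ∈ s.1),
          ∃ hq' : δ * q * δ⁻¹ ∈ s.1, s.2 ⟨δ * q * δ⁻¹, hq'⟩ = s.2 ⟨q, hq⟩) := by
  constructor
  · intro h
    refine ⟨snd_mem_normalizer h, ?_⟩
    intro q hq
    rw [Subgroup.mem_normalizer_iff] at h
    have h1 := (h (s.2 ⟨q, hq⟩, q)).mp (mem_lhd.mpr ⟨hq, rfl⟩)
    have he : ((1 : G), δ) * (s.2 ⟨q, hq⟩, q) * ((1 : G), δ)⁻¹ = (s.2 ⟨q, hq⟩, δ * q * δ⁻¹) := by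
      simp [Prod.ext_iff]
    rw [he] at h1
    obtain ⟨hq', hv⟩ := mem_lhd.mp h1
    exact ⟨hq', hv⟩
  · rintro ⟨hN, hfix⟩
    rw [Subgroup.mem_normalizer_iff]
    rintro ⟨p, q⟩
    have he : ((1 : G), δ) * (p, q) * ((1 : G), δ)⁻¹ = (p, δ * q * δ⁻¹) := by
      simp [Prod.ext_iff]
    rw [he]
    constructor
    · intro h1
      obtain ⟨hq, hv⟩ := mem_lhd.mp h1
      obtain ⟨hq', hv'⟩ := hfix q hq
      exact mem_lhd.mpr ⟨hq', by rw [hv', hv]⟩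
    · intro h1
      obtain ⟨hq'', hv⟩ := mem_lhd.mp h1
      have hq : q ∈ s.1 := by
        have := (Subgroup.mem_normalizer_iff.mp (inv_mem hN) (δ * q * δ⁻¹)).mp hq''
        have e : δ⁻¹ * (δ * q * δ⁻¹) * δ⁻¹⁻¹ = q := by group
        rwa [e] at this
      obtain ⟨hq', hv'⟩ := hfix q hq
      refine mem_lhd.mpr ⟨hq, ?_⟩
      rw [← hv', ← hv]
    
lemma Cset_iff (δ : H) :
    (δ ∈ (Subgroup.normalizer (SetLike.coe (s.2.ker.map s.1.subtype))) ∧ δ ∈ (Subgroup.normalizer (SetLike.coe s.1)) ∧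
      ∀ v ∈ s.1, δ * v * δ⁻¹ * v⁻¹ ∈ s.2.ker.map s.1.subtype)
    ↔ ((1 : G), δ) ∈ (Subgroup.normalizer (SetLike.coe (lhdOf s))) := by
  rw [one_mem_Ns_iff]
  constructor
  · rintro ⟨_, hN, hcomm⟩
    refine ⟨hN, ?_⟩
    intro q hq
    have hq' : δ * q * δ⁻¹ ∈ s.1 := (Subgroup.mem_normalizer_iff.mp hN q).mp hq
    refine ⟨hq', ?_⟩
    obtain ⟨hx, hker⟩ := mem_kerMap.mp (hcomm q hq)
    have hsub : (⟨δ * q * δ⁻¹, hq'⟩ : ↥s.1) = ⟨δ * q * δ⁻¹ * q⁻¹, hx⟩ * ⟨q, hq⟩ := by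
      apply Subtype.ext
      show δ * q * δ⁻¹ = δ * q * δ⁻¹ * q⁻¹ * q
      group
    rw [hsub, map_mul, hker, one_mul]
  · rintro ⟨hN, hfix⟩
    have hcomm : ∀ v ∈ s.1, δ * v * δ⁻¹ * v⁻¹ ∈ s.2.ker.map s.1.subtype := by
      intro v hv
      obtain ⟨hq', hv'⟩ := hfix v hv
      have hx : δ * v * δ⁻¹ * v⁻¹ ∈ s.1 := mul_mem hq' (inv_mem hv)
      refine mem_kerMap.mpr ⟨hx, ?_⟩
      have hsub : (⟨δ * v * δ⁻¹ * v⁻¹, hx⟩ : ↥s.1) = ⟨δ * v * δ⁻¹, hq'⟩ * (⟨v, hv⟩ : ↥s.1)⁻¹ := by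
        apply Subtype.ext
        rfl
      rw [hsub, map_mul, map_inv, hv', mul_inv_cancel]
    refine ⟨?_, hN, hcomm⟩
    rw [Subgroup.mem_normalizer_iff]
    intro x
    constructor
    · intro hx
      obtain ⟨hx1, hx2⟩ := mem_kerMap.mp hx
      have hq' : δ * x * δ⁻¹ ∈ s.1 := (Subgroup.mem_normalizer_iff.mp hN x).mp hx1
      refine mem_kerMap.mpr ⟨hq', ?_⟩
      obtain ⟨hq'', hv'⟩ := hfix x hx1
      show s.2 ⟨δ * x * δ⁻¹, hq''⟩ = 1
      rw [hv']
      exact hx2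
    · intro hx
      obtain ⟨hx1', hx2'⟩ := mem_kerMap.mp hx
      have hxm : x ∈ s.1 := by
        have := (Subgroup.mem_normalizer_iff.mp (inv_mem hN) (δ * x * δ⁻¹)).mp hx1'
        have e : δ⁻¹ * (δ * x * δ⁻¹) * δ⁻¹⁻¹ = x := by group
        rwa [e] at this
      obtain ⟨hq', hveq⟩ := hfix x hxm
      refine mem_kerMap.mpr ⟨hxm, ?_⟩
      rw [← hveq]
      show s.2 ⟨δ * x * δ⁻¹, hx1'⟩ = 1
      exact hx2'

end memb

section invar
variable {G H K : Type*} [Group G] [Group H] [Group K]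

lemma normalizer_conj_centralizer {V : Subgroup H} {η ε : H}
    (hη : η ∈ (Subgroup.normalizer (SetLike.coe V))) (hε : ε ∈ Subgroup.centralizer (V : Set H)) :
    η * ε * η⁻¹ ∈ Subgroup.centralizer (V : Set H) := by
  rw [Subgroup.mem_centralizer_iff]
  intro v hv
  have hv' : η⁻¹ * v * η ∈ V := by
    have := (Subgroup.mem_normalizer_iff.mp (inv_mem hη) v).mp hv
    simpa using this
  have h1 := Subgroup.mem_centralizer_iff.mp hε _ hv'
  have h2 := congrArg (fun z => η * z * η⁻¹) h1
  calc v * (η * ε * η⁻¹) = η * (η⁻¹ * v * η * ε) * η⁻¹ := by group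
    _ = η * (ε * (η⁻¹ * v * η)) * η⁻¹ := by rw [h1]
    _ = (η * ε * η⁻¹) * v := by group

variable (s : TriE G H) (t : TriE H K)

lemma one_mem_Nt_iff (hV : t.2.range = s.1) {ε : H} :
    ((ε, (1 : K)) ∈ (Subgroup.normalizer (SetLike.coe (lhdOf t)))) ↔ ε ∈ Subgroup.centralizer (s.1 : Set H) := by
  constructor
  · intro h
    rw [Subgroup.mem_centralizer_iff]
    intro v hv
    rw [← hV] at hv
    obtain ⟨w, rfl⟩ := MonoidHom.mem_range.mp hv
    rw [Subgroup.mem_normalizer_iff] at h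
    have h1 := (h (t.2 w, (w : K))).mp (mem_lhd.mpr ⟨w.2, by rw [Subtype.coe_eta]⟩)
    have he : (ε, (1 : K)) * (t.2 w, (w : K)) * (ε, (1 : K))⁻¹ = (ε * t.2 w * ε⁻¹, (w : K)) := by
      simp [Prod.ext_iff]
    rw [he] at h1
    have h2 : (t.2 w, (w : K)) ∈ lhdOf t := mem_lhd.mpr ⟨w.2, by rw [Subtype.coe_eta]⟩
    have h3 := lhd_fun h1 h2
    have h4 := congrArg (fun z => z * ε) h3
    simp only [inv_mul_cancel_right] at h4
    exact h4.symm
  · intro hε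
    apply mem_normalizer_of_cj_eq
    ext ⟨p, q⟩
    rw [mem_cj_prod]
    simp only [inv_one, one_mul, mul_one]
    constructor
    · intro h1
      obtain ⟨hq, hv⟩ := mem_lhd.mp h1
      have hr : t.2 ⟨q, hq⟩ ∈ s.1 := by rw [← hV]; exact ⟨⟨q, hq⟩, rfl⟩
      refine mem_lhd.mpr ⟨hq, ?_⟩
      have hc := centralizer_comm' (inv_mem hε) hr
      rw [inv_inv] at hc
      rw [hv] at hc
      have e : ε * (ε⁻¹ * p * ε) * ε⁻¹ = p := by group
      rw [e] at hc
      rw [hv, ← hc]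
    · intro h1
      obtain ⟨hq, hv⟩ := mem_lhd.mp h1
      have hr : t.2 ⟨q, hq⟩ ∈ s.1 := by rw [← hV]; exact ⟨⟨q, hq⟩, rfl⟩
      refine mem_lhd.mpr ⟨hq, ?_⟩
      rw [hv]
      exact (centralizer_comm' hε (by rwa [hv] at hr)).symm

/-- the subgroup `S(n) = ⊲(U,α,V) * ⁽ⁿ'¹⁾⊲(V,β,W)` -/
def Sn (n : H) : Subgroup (G × K) := starSub (lhdOf s) (cj ((n, (1 : K)) : H × K) (lhdOf t))

/-- the condition `F(g,n,k)`: the graph of `r` equals `⁽ᵍ'ᵏ⁾S(n)` -/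
def Fc (r : TriE G K) (g : G) (n : H) (k : K) : Prop :=
  lhdOf r = cj ((g, k) : G × K) (Sn s t n)

lemma Sn_left {x : G} {y : H} (hxy : (x, y) ∈ (Subgroup.normalizer (SetLike.coe (lhdOf s)))) (n : H) :
    Sn s t (y * n) = cj ((x, (1 : K)) : G × K) (Sn s t n) := by
  have h := starSub_cj (lhdOf s) (lhdOf t) (x, y) (y * n, (1 : K))
  rw [cj_eq_of_mem_normalizer hxy] at h
  simp only [inv_mul_cancel_left] at h
  exact h

lemma Sn_right {u : H} {w : K} (huw : (u, w) ∈ (Subgroup.normalizer (SetLike.coe (lhdOf t)))) (n : H) :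
    Sn s t (n * u) = cj (((1 : G), w⁻¹) : G × K) (Sn s t n) := by
  have h2 : cj ((n*u, w) : H × K) (lhdOf t) = cj ((n, (1:K)) : H × K) (lhdOf t) := by
    rw [show ((n*u, w) : H × K) = ((n, (1:K)) : H × K) * (u, w) from by simp [Prod.ext_iff],
      ← cj_cj, cj_eq_of_mem_normalizer huw]
  have h := starSub_cj (lhdOf s) (lhdOf t) (1 : G × H) ((n*u, w) : H × K)
  rw [cj_one, h2] at h
  simp only [Prod.fst_one, Prod.snd_one, inv_one, one_mul] at h
  show Sn s t (n * u) = _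
  unfold Sn
  rw [h, cj_cj]
  have he : (((1:G), w⁻¹) : G × K) * ((1:G), w) = 1 := by simp
  rw [he, cj_one]

lemma Sn_both {x : G} {y u : H} {w : K} (hxy : (x, y) ∈ (Subgroup.normalizer (SetLike.coe (lhdOf s))))
    (huw : (u, w) ∈ (Subgroup.normalizer (SetLike.coe (lhdOf t)))) (n : H) :
    Sn s t (y * n * u) = cj ((x, w⁻¹) : G × K) (Sn s t n) := by
  rw [mul_assoc, Sn_left s t hxy (n * u), Sn_right s t huw n, cj_cj]
  norm_num

lemma F_inv {x g : G} {y n u : H} {w k : K} (hxy : (x, y) ∈ (Subgroup.normalizer (SetLike.coe (lhdOf s))))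
    (huw : (u, w) ∈ (Subgroup.normalizer (SetLike.coe (lhdOf t)))) (r : TriE G K) :
    Fc s t r (g * x⁻¹) (y * n * u) (k * w) ↔ Fc s t r g n k := by
  unfold Fc
  rw [Sn_both s t hxy huw n, cj_cj]
  have : ((g * x⁻¹, k * w) : G × K) * (x, w⁻¹) = (g, k) := by simp
  rw [this]
end invar

section choice
variable {G H K : Type*} [Group G] [Group H] [Group K]
variable (s : TriE G H) (t : TriE H K) (A : Finset G) (B : Finset H) (C : Finset K)

/-- the Cset membership matches `(1,δ) ∈ N_{G×H}(⊲s)` -/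
lemma mem_CsetSet_iff (δ : H) :
    δ ∈ {h : H | h ∈ (Subgroup.normalizer (SetLike.coe (s.2.ker.map s.1.subtype))) ∧ h ∈ (Subgroup.normalizer (SetLike.coe s.1)) ∧
      ∀ v ∈ s.1, h * v * h⁻¹ * v⁻¹ ∈ s.2.ker.map s.1.subtype}
    ↔ ((1 : G), δ) ∈ (Subgroup.normalizer (SetLike.coe (lhdOf s))) := by
  rw [Set.mem_setOf_eq]
  exact Cset_iff δ

variable (hC : isChoice s t A B C)

noncomputable def aF (g : G) : G := (hC.1 g).exists.choose

lemma aF_spec (g : G) : aF s t A B C hC g ∈ A ∧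
    g⁻¹ * aF s t A B C hC g ∈ Subgroup.map (MonoidHom.fst G H) (Subgroup.normalizer (SetLike.coe (lhdOf s))) :=
  (hC.1 g).exists.choose_spec

lemma aF_unique {g x : G} (hx : x ∈ A)
    (hx2 : g⁻¹ * x ∈ Subgroup.map (MonoidHom.fst G H) (Subgroup.normalizer (SetLike.coe (lhdOf s)))) :
    aF s t A B C hC g = x :=
  ((hC.1 g).unique (aF_spec s t A B C hC g) ⟨hx, hx2⟩)

noncomputable def q0 (g : G) : G × H :=
  ((Subgroup.mem_map.mp (aF_spec s t A B C hC g).2).choose)⁻¹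

lemma q0_mem (g : G) : q0 s t A B C hC g ∈ (Subgroup.normalizer (SetLike.coe (lhdOf s))) := by
  apply inv_mem
  exact (Subgroup.mem_map.mp (aF_spec s t A B C hC g).2).choose_spec.1

lemma q0_fst (g : G) : (q0 s t A B C hC g).1 = (aF s t A B C hC g)⁻¹ * g := by
  have h := (Subgroup.mem_map.mp (aF_spec s t A B C hC g).2).choose_spec.2
  show ((Subgroup.mem_map.mp (aF_spec s t A B C hC g).2).choose.1)⁻¹ = _
  have : (Subgroup.mem_map.mp (aF_spec s t A B C hC g).2).choose.1 = g⁻¹ * aF s t A B C hC g := h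
  rw [this]
  group

noncomputable def cF (k : K) : K := (hC.2.2.2 k).exists.choose

lemma cF_spec (k : K) : cF s t A B C hC k ∈ C ∧
    k⁻¹ * cF s t A B C hC k ∈ Subgroup.map (MonoidHom.snd H K) (Subgroup.normalizer (SetLike.coe (lhdOf t))) :=
  (hC.2.2.2 k).exists.choose_spec

lemma cF_unique {k x : K} (hx : x ∈ C)
    (hx2 : k⁻¹ * x ∈ Subgroup.map (MonoidHom.snd H K) (Subgroup.normalizer (SetLike.coe (lhdOf t)))) :
    cF s t A B C hC k = x :=
  ((hC.2.2.2 k).unique (cF_spec s t A B C hC k) ⟨hx, hx2⟩)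

noncomputable def qt (k : K) : H × K :=
  (Subgroup.mem_map.mp (cF_spec s t A B C hC k).2).choose

lemma qt_mem (k : K) : qt s t A B C hC k ∈ (Subgroup.normalizer (SetLike.coe (lhdOf t))) :=
  (Subgroup.mem_map.mp (cF_spec s t A B C hC k).2).choose_spec.1

lemma qt_snd (k : K) : (qt s t A B C hC k).2 = k⁻¹ * cF s t A B C hC k :=
  (Subgroup.mem_map.mp (cF_spec s t A B C hC k).2).choose_spec.2

noncomputable def bF (m : H) (hm : m ∈ (Subgroup.normalizer (SetLike.coe s.1))) : H :=
  (hC.2.2.1 m hm).exists.choose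

lemma bF_spec (m : H) (hm : m ∈ (Subgroup.normalizer (SetLike.coe s.1))) : bF s t A B C hC m hm ∈ B ∧
    ((1 : G), m⁻¹ * bF s t A B C hC m hm) ∈ (Subgroup.normalizer (SetLike.coe (lhdOf s))) := by
  obtain ⟨h1, h2⟩ := (hC.2.2.1 m hm).exists.choose_spec
  exact ⟨h1, (mem_CsetSet_iff s _).mp h2⟩

lemma bF_unique {m x : H} (hm : m ∈ (Subgroup.normalizer (SetLike.coe s.1))) (hx : x ∈ B)
    (hx2 : ((1 : G), m⁻¹ * x) ∈ (Subgroup.normalizer (SetLike.coe (lhdOf s)))) :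
    bF s t A B C hC m hm = x :=
  (hC.2.2.1 m hm).unique (hC.2.2.1 m hm).exists.choose_spec
    ⟨hx, (mem_CsetSet_iff s _).mpr hx2⟩

end choice

section keys
variable {G H K : Type*} [Group G] [Group H] [Group K]
variable (s : TriE G H) (t : TriE H K) (r : TriE G K)
variable (A : Finset G) (B : Finset H) (C : Finset K)

/-- the parameter set `T'(r)` -/
def Tp : G × H × K → Prop := fun z =>
  z.2.1 ∈ (Subgroup.normalizer (SetLike.coe s.1)) ∧ Fc s t r z.1 z.2.1 z.2.2

/-- the representative set: `(a, b⁻¹, c)` with `(a,b,c) ∈ A × B × C` satisfying `F` -/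
def RepP : G × H × K → Prop := fun z =>
  z.1 ∈ A ∧ z.2.1⁻¹ ∈ B ∧ z.2.2 ∈ C ∧ Fc s t r z.1 z.2.1 z.2.2

/-- the double-counting set `X` -/
def Xp : (G × H) × (H × K) × (G × H × K) → Prop := fun z =>
  z.1 ∈ (Subgroup.normalizer (SetLike.coe (lhdOf s))) ∧ z.2.1 ∈ (Subgroup.normalizer (SetLike.coe (lhdOf t))) ∧
    RepP s t r A B C
      (z.2.2.1 * z.1.1⁻¹, z.1.2 * z.2.2.2.1 * z.2.1.1, z.2.2.2.2 * z.2.1.2)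

variable (hC : isChoice s t A B C)

lemma keyA {g x : G} {y : H} (hxy : (x, y) ∈ (Subgroup.normalizer (SetLike.coe (lhdOf s)))) (hA : g * x⁻¹ ∈ A) :
    aF s t A B C hC g = g * x⁻¹ := by
  apply aF_unique
  · exact hA
  · refine Subgroup.mem_map.mpr ⟨(x, y)⁻¹, inv_mem hxy, ?_⟩
    show x⁻¹ = g⁻¹ * (g * x⁻¹)
    group

lemma keyC {u : H} {k w : K} (huw : (u, w) ∈ (Subgroup.normalizer (SetLike.coe (lhdOf t)))) (hCk : k * w ∈ C) :
    cF s t A B C hC k = k * w := by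
  apply cF_unique
  · exact hCk
  · refine Subgroup.mem_map.mpr ⟨(u, w), huw, ?_⟩
    show w = k⁻¹ * (k * w)
    group

lemma q0_fst' {g x : G} {y : H} (hxy : (x, y) ∈ (Subgroup.normalizer (SetLike.coe (lhdOf s)))) (hA : g * x⁻¹ ∈ A) :
    (q0 s t A B C hC g).1 = x := by
  rw [q0_fst, keyA s t A B C hC hxy hA]
  group

lemma delta_mem {g x : G} {y : H} (hxy : (x, y) ∈ (Subgroup.normalizer (SetLike.coe (lhdOf s)))) (hA : g * x⁻¹ ∈ A) :
    ((1 : G), y * ((q0 s t A B C hC g).2)⁻¹) ∈ (Subgroup.normalizer (SetLike.coe (lhdOf s))) := by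
  have h1 : ((x, y) * (q0 s t A B C hC g)⁻¹) ∈ (Subgroup.normalizer (SetLike.coe (lhdOf s))) :=
    mul_mem hxy (inv_mem (q0_mem s t A B C hC g))
  have h2 : (x, y) * (q0 s t A B C hC g)⁻¹ = ((1 : G), y * ((q0 s t A B C hC g).2)⁻¹) := by
    have := q0_fst' s t A B C hC hxy hA
    rw [Prod.ext_iff]
    constructor
    · show x * ((q0 s t A B C hC g).1)⁻¹ = 1
      rw [this]; group
    · rfl
  rwa [h2] at h1

lemma epsp_mem {u : H} {k w : K} (huw : (u, w) ∈ (Subgroup.normalizer (SetLike.coe (lhdOf t)))) (hCk : k * w ∈ C) :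
    ((u * ((qt s t A B C hC k).1)⁻¹, (1 : K))) ∈ (Subgroup.normalizer (SetLike.coe (lhdOf t))) := by
  have h1 : ((u, w) * (qt s t A B C hC k)⁻¹) ∈ (Subgroup.normalizer (SetLike.coe (lhdOf t))) :=
    mul_mem huw (inv_mem (qt_mem s t A B C hC k))
  have h2 : (u, w) * (qt s t A B C hC k)⁻¹ = ((u * ((qt s t A B C hC k).1)⁻¹, (1 : K))) := by
    have e1 : (qt s t A B C hC k).2 = w := by
      rw [qt_snd, keyC s t A B C hC huw hCk]; group
    rw [Prod.ext_iff]
    constructor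
    · rfl
    · show w * ((qt s t A B C hC k).2)⁻¹ = 1
      rw [e1]; group
  rwa [h2] at h1

/-- uniqueness characterization of `bF` in the fiber analysis -/
lemma keyB (hV : t.2.range = s.1) {g x : G} {y n u : H} {k w : K}
    (hxy : (x, y) ∈ (Subgroup.normalizer (SetLike.coe (lhdOf s)))) (huw : (u, w) ∈ (Subgroup.normalizer (SetLike.coe (lhdOf t))))
    (hn : n ∈ (Subgroup.normalizer (SetLike.coe s.1))) (hA : g * x⁻¹ ∈ A) (hCk : k * w ∈ C)
    (hB : (y * n * u)⁻¹ ∈ B)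
    (pf : ((q0 s t A B C hC g).2 * n * (qt s t A B C hC k).1)⁻¹ ∈ (Subgroup.normalizer (SetLike.coe s.1))) :
    bF s t A B C hC ((q0 s t A B C hC g).2 * n * (qt s t A B C hC k).1)⁻¹ pf
      = (y * n * u)⁻¹ := by
  set y₀ := (q0 s t A B C hC g).2 with hy₀
  set u₀ := (qt s t A B C hC k).1 with hu₀
  apply bF_unique
  · exact hB
  · -- show (1, (y₀*n*u₀) * (y*n*u)⁻¹) ∈ Ns, modulo the double inverse
    have hζ : n * (u * u₀⁻¹)⁻¹ * n⁻¹ ∈ Subgroup.centralizer ((s.1 : Subgroup H) : Set H) := by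
      apply normalizer_conj_centralizer hn
      apply inv_mem
      exact (one_mem_Nt_iff s t hV).mp (epsp_mem s t A B C hC huw hCk)
    have h1 : ((1 : G), n * (u * u₀⁻¹)⁻¹ * n⁻¹) ∈ (Subgroup.normalizer (SetLike.coe (lhdOf s))) :=
      centralizer_one_mem_Ns hζ
    have h2 : (q0 s t A B C hC g) * ((1 : G), n * (u * u₀⁻¹)⁻¹ * n⁻¹)
        * (q0 s t A B C hC g)⁻¹ ∈ (Subgroup.normalizer (SetLike.coe (lhdOf s))) :=
      mul_mem (mul_mem (q0_mem s t A B C hC g) h1) (inv_mem (q0_mem s t A B C hC g))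
    have h3 := mul_mem h2 (inv_mem (delta_mem s t A B C hC hxy hA))
    have he : (q0 s t A B C hC g) * ((1 : G), n * (u * u₀⁻¹)⁻¹ * n⁻¹)
        * (q0 s t A B C hC g)⁻¹ * ((1 : G), y * y₀⁻¹)⁻¹
        = ((1 : G), (((y₀ * n * u₀)⁻¹)⁻¹) * (y * n * u)⁻¹) := by
      rw [Prod.ext_iff]
      constructor
      · show (q0 s t A B C hC g).1 * 1 * ((q0 s t A B C hC g).1)⁻¹ * 1⁻¹ = 1
        group
      · show y₀ * (n * (u * u₀⁻¹)⁻¹ * n⁻¹) * y₀⁻¹ * (y * y₀⁻¹)⁻¹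
            = (((y₀ * n * u₀)⁻¹)⁻¹) * (y * n * u)⁻¹
        group
    rwa [he] at h3
end keys

section eq34
variable {G H K : Type*} [Group G] [Group H] [Group K]
variable (s : TriE G H) (t : TriE H K) (r : TriE G K)
variable (A : Finset G) (B : Finset H) (C : Finset K)
variable (hC : isChoice s t A B C)

/-- `m' = y₀ n u₀` -/
noncomputable def mpr (g : G) (n : H) (k : K) : H :=
  (q0 s t A B C hC g).2 * n * (qt s t A B C hC k).1

/-- total version of `bF` at `m'⁻¹` -/
noncomputable def bFn (g : G) (n : H) (k : K) : H :=
  if hm : (mpr s t A B C hC g n k)⁻¹ ∈ (Subgroup.normalizer (SetLike.coe s.1))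
  then bF s t A B C hC _ hm else 1

noncomputable def gam (g : G) (n : H) (k : K) : H :=
  ((mpr s t A B C hC g n k) * bFn s t A B C hC g n k)⁻¹

lemma mpr_mem (hV : t.2.range = s.1) (g : G) {n : H} (k : K) (hn : n ∈ (Subgroup.normalizer (SetLike.coe s.1))) :
    (mpr s t A B C hC g n k)⁻¹ ∈ (Subgroup.normalizer (SetLike.coe s.1)) :=
  inv_mem (mul_mem (mul_mem (snd_mem_normalizer (q0_mem s t A B C hC g)) hn)
    (fst_mem_normalizer_t hV (qt_mem s t A B C hC k)))

lemma bFn_spec (hV : t.2.range = s.1) (g : G) {n : H} (k : K) (hn : n ∈ (Subgroup.normalizer (SetLike.coe s.1))) :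
    bFn s t A B C hC g n k ∈ B ∧
    ((1 : G), (mpr s t A B C hC g n k)⁻¹⁻¹ * bFn s t A B C hC g n k) ∈ (Subgroup.normalizer (SetLike.coe (lhdOf s))) := by
  rw [bFn, dif_pos (mpr_mem s t A B C hC hV g k hn)]
  exact bF_spec s t A B C hC _ _

lemma bFn_eqB (hV : t.2.range = s.1) {g x : G} {y n u : H} {k w : K}
    (hxy : (x, y) ∈ (Subgroup.normalizer (SetLike.coe (lhdOf s)))) (huw : (u, w) ∈ (Subgroup.normalizer (SetLike.coe (lhdOf t))))
    (hn : n ∈ (Subgroup.normalizer (SetLike.coe s.1))) (hA : g * x⁻¹ ∈ A) (hCk : k * w ∈ C)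
    (hB : (y * n * u)⁻¹ ∈ B) :
    bFn s t A B C hC g n k = (y * n * u)⁻¹ := by
  rw [bFn, dif_pos (mpr_mem s t A B C hC hV g k hn)]
  have h := keyB s t A B C hC hV hxy huw hn hA hCk hB
    (by rw [show (q0 s t A B C hC g).2 * n * (qt s t A B C hC k).1
        = mpr s t A B C hC g n k from rfl]; exact mpr_mem s t A B C hC hV g k hn)
  exact h

lemma gam_mem (hV : t.2.range = s.1) (g : G) {n : H} (k : K) (hn : n ∈ (Subgroup.normalizer (SetLike.coe s.1))) :
    ((1 : G), gam s t A B C hC g n k) ∈ (Subgroup.normalizer (SetLike.coe (lhdOf s))) := by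
  have h := inv_mem (bFn_spec s t A B C hC hV g k hn).2
  have he : (((1 : G), (mpr s t A B C hC g n k)⁻¹⁻¹ * bFn s t A B C hC g n k))⁻¹
      = ((1 : G), gam s t A B C hC g n k) := by
    rw [Prod.inv_mk, gam, Prod.mk.injEq]
    constructor
    · group
    · group
  rwa [he] at h

/-- the forward map of the bijection `T' × C_H(V) ≃ X` (value part) -/
noncomputable def fwdVal (z : G × H × K) (e : H) : (G × H) × (H × K) × (G × H × K) :=
  (((aF s t A B C hC z.1)⁻¹ * z.1,
      gam s t A B C hC z.1 z.2.1 z.2.2 * e * (q0 s t A B C hC z.1).2),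
   ((z.2.1)⁻¹ * ((q0 s t A B C hC z.1).2)⁻¹ * (gam s t A B C hC z.1 z.2.1 z.2.2 * e)⁻¹
        * (bFn s t A B C hC z.1 z.2.1 z.2.2)⁻¹,
      (z.2.2)⁻¹ * cF s t A B C hC z.2.2),
   z)

/-- the ε-recovery map (value part) -/
noncomputable def bwdEps (w : (G × H) × (H × K) × (G × H × K)) : H :=
  (gam s t A B C hC w.2.2.1 w.2.2.2.1 w.2.2.2.2)⁻¹
    * (w.1.2 * ((q0 s t A B C hC w.2.2.1).2)⁻¹)

lemma fwd_mem1 (hV : t.2.range = s.1) {z : G × H × K} {e : H} (hn : z.2.1 ∈ (Subgroup.normalizer (SetLike.coe s.1)))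
    (he : e ∈ Subgroup.centralizer ((s.1 : Subgroup H) : Set H)) :
    (fwdVal s t A B C hC z e).1 ∈ (Subgroup.normalizer (SetLike.coe (lhdOf s))) := by
  have h1 : ((1 : G), gam s t A B C hC z.1 z.2.1 z.2.2 * e) ∈ (Subgroup.normalizer (SetLike.coe (lhdOf s))) := by
    have := mul_mem (gam_mem s t A B C hC hV z.1 z.2.2 hn) (centralizer_one_mem_Ns he)
    simpa using this
  have h2 := mul_mem h1 (q0_mem s t A B C hC z.1)
  have he2 : ((1 : G), gam s t A B C hC z.1 z.2.1 z.2.2 * e) * q0 s t A B C hC z.1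
      = (fwdVal s t A B C hC z e).1 := by
    rw [fwdVal, Prod.mk_mul_mk, Prod.mk.injEq]
    constructor
    · rw [q0_fst]; group
    · rw [mul_assoc]
  rwa [he2] at h2

lemma fwd_mem2 (hV : t.2.range = s.1) {z : G × H × K} {e : H} (hn : z.2.1 ∈ (Subgroup.normalizer (SetLike.coe s.1)))
    (he : e ∈ Subgroup.centralizer ((s.1 : Subgroup H) : Set H)) :
    (fwdVal s t A B C hC z e).2.1 ∈ (Subgroup.normalizer (SetLike.coe (lhdOf t))) := by
  have hy₀ : (q0 s t A B C hC z.1).2 ∈ (Subgroup.normalizer (SetLike.coe s.1)) :=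
    snd_mem_normalizer (q0_mem s t A B C hC z.1)
  have hρ : ((q0 s t A B C hC z.1).2 * z.2.1)⁻¹ * e⁻¹ * (((q0 s t A B C hC z.1).2 * z.2.1)⁻¹)⁻¹
      ∈ Subgroup.centralizer ((s.1 : Subgroup H) : Set H) :=
    normalizer_conj_centralizer (inv_mem (mul_mem hy₀ hn)) (inv_mem he)
  have h1 : ((((q0 s t A B C hC z.1).2 * z.2.1)⁻¹ * e⁻¹ * (((q0 s t A B C hC z.1).2 * z.2.1)⁻¹)⁻¹,
      (1 : K))) ∈ (Subgroup.normalizer (SetLike.coe (lhdOf t))) := (one_mem_Nt_iff s t hV).mpr hρ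
  have h2 := mul_mem h1 (qt_mem s t A B C hC z.2.2)
  have he2 : ((((q0 s t A B C hC z.1).2 * z.2.1)⁻¹ * e⁻¹ * (((q0 s t A B C hC z.1).2 * z.2.1)⁻¹)⁻¹,
      (1 : K))) * qt s t A B C hC z.2.2 = (fwdVal s t A B C hC z e).2.1 := by
    rw [fwdVal]
    show (_ * (qt s t A B C hC z.2.2).1, 1 * (qt s t A B C hC z.2.2).2) = _
    rw [Prod.mk.injEq]
    constructor
    · rw [gam, mpr]
      group
    · rw [qt_snd]
      group
  rwa [he2] at h2

lemma fwd_mem3 (hV : t.2.range = s.1) {z : G × H × K} {e : H} (hn : z.2.1 ∈ (Subgroup.normalizer (SetLike.coe s.1)))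
    (hF : Fc s t r z.1 z.2.1 z.2.2)
    (he : e ∈ Subgroup.centralizer ((s.1 : Subgroup H) : Set H)) :
    RepP s t r A B C
      ((fwdVal s t A B C hC z e).2.2.1 * ((fwdVal s t A B C hC z e).1.1)⁻¹,
       (fwdVal s t A B C hC z e).1.2 * (fwdVal s t A B C hC z e).2.2.2.1
          * (fwdVal s t A B C hC z e).2.1.1,
       (fwdVal s t A B C hC z e).2.2.2.2 * (fwdVal s t A B C hC z e).2.1.2) := by
  refine ⟨?_, ?_, ?_, ?_⟩
  · show z.1 * ((aF s t A B C hC z.1)⁻¹ * z.1)⁻¹ ∈ A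
    have e1 : z.1 * ((aF s t A B C hC z.1)⁻¹ * z.1)⁻¹ = aF s t A B C hC z.1 := by group
    rw [e1]
    exact (aF_spec s t A B C hC z.1).1
  · show (gam s t A B C hC z.1 z.2.1 z.2.2 * e * (q0 s t A B C hC z.1).2 * z.2.1 *
      ((z.2.1)⁻¹ * ((q0 s t A B C hC z.1).2)⁻¹ * (gam s t A B C hC z.1 z.2.1 z.2.2 * e)⁻¹
        * (bFn s t A B C hC z.1 z.2.1 z.2.2)⁻¹))⁻¹ ∈ B
    have e1 : (gam s t A B C hC z.1 z.2.1 z.2.2 * e * (q0 s t A B C hC z.1).2 * z.2.1 *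
      ((z.2.1)⁻¹ * ((q0 s t A B C hC z.1).2)⁻¹ * (gam s t A B C hC z.1 z.2.1 z.2.2 * e)⁻¹
        * (bFn s t A B C hC z.1 z.2.1 z.2.2)⁻¹))⁻¹ = bFn s t A B C hC z.1 z.2.1 z.2.2 := by
      group
    rw [e1]
    exact (bFn_spec s t A B C hC hV z.1 z.2.2 hn).1
  · show z.2.2 * ((z.2.2)⁻¹ * cF s t A B C hC z.2.2) ∈ C
    have e1 : z.2.2 * ((z.2.2)⁻¹ * cF s t A B C hC z.2.2) = cF s t A B C hC z.2.2 := by group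
    rw [e1]
    exact (cF_spec s t A B C hC z.2.2).1
  · show Fc s t r _ _ _
    have := (F_inv s t (fwd_mem1 s t A B C hC hV hn he)
      (fwd_mem2 s t A B C hC hV hn he) r).mpr hF
    exact this

lemma fwd_Xp (hV : t.2.range = s.1) {z : G × H × K} {e : H} (hτ : Tp s t r z)
    (he : e ∈ Subgroup.centralizer ((s.1 : Subgroup H) : Set H)) :
    Xp s t r A B C (fwdVal s t A B C hC z e) :=
  ⟨fwd_mem1 s t A B C hC hV hτ.1 he, fwd_mem2 s t A B C hC hV hτ.1 he,
    fwd_mem3 s t r A B C hC hV hτ.1 hτ.2 he⟩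
end eq34

section eq3b
variable {G H K : Type*} [Group G] [Group H] [Group K]
variable (s : TriE G H) (t : TriE H K) (r : TriE G K)
variable (A : Finset G) (B : Finset H) (C : Finset K)
variable (hC : isChoice s t A B C)

lemma bwd_hn (hle : ∀ b ∈ B, b ∈ (Subgroup.normalizer (SetLike.coe s.1))) (hV : t.2.range = s.1) {x : G} {y n u : H} {w : K}
    (hxy : (x, y) ∈ (Subgroup.normalizer (SetLike.coe (lhdOf s)))) (huw : (u, w) ∈ (Subgroup.normalizer (SetLike.coe (lhdOf t))))
    (hB : (y * n * u)⁻¹ ∈ B) : n ∈ (Subgroup.normalizer (SetLike.coe s.1)) := by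
  have h1 : y * n * u ∈ (Subgroup.normalizer (SetLike.coe s.1)) := by
    have h2 := inv_mem (hle _ hB)
    rwa [inv_inv] at h2
  have e1 : n = y⁻¹ * (y * n * u) * u⁻¹ := by group
  rw [e1]
  exact mul_mem (mul_mem (inv_mem (snd_mem_normalizer hxy)) h1)
    (inv_mem (fst_mem_normalizer_t hV huw))

lemma bwd_Tp (hle : ∀ b ∈ B, b ∈ (Subgroup.normalizer (SetLike.coe s.1))) (hV : t.2.range = s.1) {z : (G × H) × (H × K) × (G × H × K)}
    (hz : Xp s t r A B C z) : Tp s t r z.2.2 := by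
  obtain ⟨hxy, huw, hA, hB, hCk, hF⟩ := hz
  exact ⟨bwd_hn s t B hle hV hxy huw hB, (F_inv s t hxy huw r).mp hF⟩

lemma bwdEps_mem (hV : t.2.range = s.1) {z : (G × H) × (H × K) × (G × H × K)}
    (hz : Xp s t r A B C z) :
    bwdEps s t A B C hC z ∈ Subgroup.centralizer ((s.1 : Subgroup H) : Set H) := by
  obtain ⟨hxy, huw, hA, hB, hCk, hF⟩ := hz
  have hn : z.2.2.2.1 ∈ (Subgroup.normalizer (SetLike.coe s.1)) := bwd_hn s t B hC.2.1 hV hxy huw hB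
  have hbe := bFn_eqB s t A B C hC hV hxy huw hn hA hCk hB
  have hy₀ : (q0 s t A B C hC z.2.2.1).2 ∈ (Subgroup.normalizer (SetLike.coe s.1)) :=
    snd_mem_normalizer (q0_mem s t A B C hC z.2.2.1)
  have hζ : z.2.2.2.1 * (z.2.1.1 * ((qt s t A B C hC z.2.2.2.2).1)⁻¹)⁻¹ * (z.2.2.2.1)⁻¹
      ∈ Subgroup.centralizer ((s.1 : Subgroup H) : Set H) := by
    apply normalizer_conj_centralizer hn
    apply inv_mem
    exact (one_mem_Nt_iff s t hV).mp (epsp_mem s t A B C hC huw hCk)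
  have hfin := normalizer_conj_centralizer hy₀ hζ
  have he : (q0 s t A B C hC z.2.2.1).2
        * (z.2.2.2.1 * (z.2.1.1 * ((qt s t A B C hC z.2.2.2.2).1)⁻¹)⁻¹ * (z.2.2.2.1)⁻¹)
        * ((q0 s t A B C hC z.2.2.1).2)⁻¹
      = bwdEps s t A B C hC z := by
    rw [bwdEps, gam, mpr, hbe]
    group
  rwa [he] at hfin

/-- the bijection `T'(r) × C_H(V) ≃ X(r)` -/
noncomputable def eq3 (hV : t.2.range = s.1) :
    ({τ : G × H × K // Tp s t r τ}
        × ↥(Subgroup.centralizer ((s.1 : Subgroup H) : Set H)))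
      ≃ {z : (G × H) × (H × K) × (G × H × K) // Xp s t r A B C z} where
  toFun p := ⟨fwdVal s t A B C hC p.1.1 ↑p.2, fwd_Xp s t r A B C hC hV p.1.2 p.2.2⟩
  invFun z := (⟨z.1.2.2, bwd_Tp s t r A B C hC.2.1 hV z.2⟩,
    ⟨bwdEps s t A B C hC z.1, bwdEps_mem s t r A B C hC hV z.2⟩)
  left_inv p := by
    obtain ⟨⟨z, hτ⟩, ⟨e, he⟩⟩ := p
    refine Prod.ext (Subtype.ext rfl) (Subtype.ext ?_)
    show bwdEps s t A B C hC (fwdVal s t A B C hC z e) = e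
    rw [bwdEps, fwdVal]
    group
  right_inv z := by
    obtain ⟨z, hz⟩ := z
    obtain ⟨hxy, huw, hA, hB, hCk, hF⟩ := hz
    apply Subtype.ext
    show fwdVal s t A B C hC z.2.2 (bwdEps s t A B C hC z) = z
    have hn : z.2.2.2.1 ∈ (Subgroup.normalizer (SetLike.coe s.1)) := bwd_hn s t B hC.2.1 hV hxy huw hB
    have hbe := bFn_eqB s t A B C hC hV hxy huw hn hA hCk hB
    have ha : aF s t A B C hC z.2.2.1 = z.2.2.1 * (z.1.1)⁻¹ := keyA s t A B C hC hxy hA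
    have hc : cF s t A B C hC z.2.2.2.2 = z.2.2.2.2 * z.2.1.2 := keyC s t A B C hC huw hCk
    have hy0 : (q0 s t A B C hC z.2.2.1).1 = z.1.1 := q0_fst' s t A B C hC hxy hA
    rw [fwdVal, bwdEps, gam, hbe, ha, hc]
    refine Prod.ext (Prod.ext ?_ ?_) (Prod.ext (Prod.ext ?_ ?_) ?_)
    · show (z.2.2.1 * (z.1.1)⁻¹)⁻¹ * z.2.2.1 = z.1.1
      group
    · show _ = z.1.2
      group
    · show _ = z.2.1.1
      group
    · show z.2.2.2.2⁻¹ * (z.2.2.2.2 * z.2.1.2) = z.2.1.2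
      group
    · rfl
end eq3b

section eq124
variable {G H K : Type*} [Group G] [Group H] [Group K]
variable (s : TriE G H) (t : TriE H K) (r : TriE G K)
variable (A : Finset G) (B : Finset H) (C : Finset K)
variable (hC : isChoice s t A B C)

/-- `X ≃ Rep × Ns × Nt` -/
noncomputable def eq4 : {z : (G × H) × (H × K) × (G × H × K) // Xp s t r A B C z}
    ≃ ({ρ : G × H × K // RepP s t r A B C ρ}
        × ↥(Subgroup.normalizer (SetLike.coe (lhdOf s))) × ↥(Subgroup.normalizer (SetLike.coe (lhdOf t)))) where
  toFun z := (⟨(z.1.2.2.1 * (z.1.1.1)⁻¹, z.1.1.2 * z.1.2.2.2.1 * z.1.2.1.1,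
      z.1.2.2.2.2 * z.1.2.1.2), z.2.2.2⟩, ⟨z.1.1, z.2.1⟩, ⟨z.1.2.1, z.2.2.1⟩)
  invFun p := ⟨((p.2.1 : G × H), (p.2.2 : H × K),
      (p.1.1.1 * (p.2.1 : G × H).1, ((p.2.1 : G × H).2)⁻¹ * p.1.1.2.1 * ((p.2.2 : H × K).1)⁻¹,
        p.1.1.2.2 * ((p.2.2 : H × K).2)⁻¹)), by
    refine ⟨p.2.1.2, p.2.2.2, ?_⟩
    have e1 : (p.1.1.1 * (p.2.1 : G × H).1) * ((p.2.1 : G × H).1)⁻¹ = p.1.1.1 := by group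
    have e2 : (p.2.1 : G × H).2 * (((p.2.1 : G × H).2)⁻¹ * p.1.1.2.1 * ((p.2.2 : H × K).1)⁻¹)
        * (p.2.2 : H × K).1 = p.1.1.2.1 := by group
    have e3 : (p.1.1.2.2 * ((p.2.2 : H × K).2)⁻¹) * (p.2.2 : H × K).2 = p.1.1.2.2 := by group
    show RepP s t r A B C _
    rw [e1, e2, e3]
    exact p.1.2⟩
  left_inv z := by
    apply Subtype.ext
    refine Prod.ext rfl (Prod.ext rfl ?_)
    refine Prod.ext ?_ (Prod.ext ?_ ?_)
    · show z.1.2.2.1 * (z.1.1.1)⁻¹ * z.1.1.1 = z.1.2.2.1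
      group
    · show (z.1.1.2)⁻¹ * (z.1.1.2 * z.1.2.2.2.1 * z.1.2.1.1) * (z.1.2.1.1)⁻¹ = z.1.2.2.2.1
      group
    · show z.1.2.2.2.2 * z.1.2.1.2 * (z.1.2.1.2)⁻¹ = z.1.2.2.2.2
      group
  right_inv p := by
    refine Prod.ext (Subtype.ext ?_) (Prod.ext (Subtype.ext rfl) (Subtype.ext rfl))
    refine Prod.ext ?_ (Prod.ext ?_ ?_)
    · show p.1.1.1 * (p.2.1 : G × H).1 * ((p.2.1 : G × H).1)⁻¹ = p.1.1.1
      group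
    · show (p.2.1 : G × H).2 * (((p.2.1 : G × H).2)⁻¹ * p.1.1.2.1 * ((p.2.2 : H × K).1)⁻¹)
          * (p.2.2 : H × K).1 = p.1.1.2.1
      group
    · show p.1.1.2.2 * ((p.2.2 : H × K).2)⁻¹ * (p.2.2 : H × K).2 = p.1.1.2.2
      group

/-- the big parameter set of pairs of conjugators -/
def bigT : (G × H) × (H × K) → Prop := fun x =>
  Subgroup.map (MonoidHom.fst H K) (cj x.2 (lhdOf t))
      = Subgroup.map (MonoidHom.snd G H) (cj x.1 (lhdOf s)) ∧
  lhdOf r = starSub (cj x.1 (lhdOf s)) (cj x.2 (lhdOf t))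

/-- the pair set -/
def Pp : TriE G H × TriE H K → Prop := fun p =>
  p.2.2.range = p.1.1 ∧ lhdOf r = starSub (lhdOf p.1) (lhdOf p.2) ∧
  (∃ a : G × H, cj a (lhdOf s) = lhdOf p.1) ∧ (∃ b : H × K, cj b (lhdOf t) = lhdOf p.2)

lemma bigT_iff (hV : t.2.range = s.1) (g : G) (h h' : H) (k : K) :
    bigT s t r ((g, h), (h', k)) ↔ (h⁻¹ * h' ∈ (Subgroup.normalizer (SetLike.coe s.1)) ∧ Fc s t r g (h⁻¹ * h') k) := by
  unfold bigT
  rw [map_fst_cj, map_snd_cj, map_fst_lhd, map_snd_lhd, hV]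
  constructor
  · rintro ⟨h1, h2⟩
    constructor
    · apply mem_normalizer_of_cj_eq
      have := congrArg (cj h⁻¹) h1
      rwa [cj_cj, cj_cj, inv_mul_cancel, cj_one] at this
    · show lhdOf r = cj ((g, k) : G × K) (Sn s t (h⁻¹ * h'))
      rw [h2, starSub_cj (lhdOf s) (lhdOf t) (g, h) (h', k)]
      rfl
  · rintro ⟨h1, h2⟩
    constructor
    · have := congrArg (cj h) (cj_eq_of_mem_normalizer h1)
      rwa [cj_cj, mul_inv_cancel_left] at this
    · show lhdOf r = starSub (cj ((g, h) : G × H) (lhdOf s)) (cj ((h', k) : H × K) (lhdOf t))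
      rw [starSub_cj (lhdOf s) (lhdOf t) (g, h) (h', k)]
      exact h2

/-- `bigT ≃ H × T'` -/
noncomputable def eq2 (hV : t.2.range = s.1) :
    {x : (G × H) × (H × K) // bigT s t r x} ≃ (H × {τ : G × H × K // Tp s t r τ}) where
  toFun x := (x.1.1.2, ⟨(x.1.1.1, (x.1.1.2)⁻¹ * x.1.2.1, x.1.2.2),
    (bigT_iff s t r hV x.1.1.1 x.1.1.2 x.1.2.1 x.1.2.2).mp x.2⟩)
  invFun p := ⟨((p.2.1.1, p.1), (p.1 * p.2.1.2.1, p.2.1.2.2)),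
    (bigT_iff s t r hV p.2.1.1 p.1 (p.1 * p.2.1.2.1) p.2.1.2.2).mpr (by
      have e : p.1⁻¹ * (p.1 * p.2.1.2.1) = p.2.1.2.1 := by group
      rw [e]
      exact p.2.2)⟩
  left_inv x := by
    apply Subtype.ext
    refine Prod.ext rfl (Prod.ext ?_ rfl)
    show x.1.1.2 * ((x.1.1.2)⁻¹ * x.1.2.1) = x.1.2.1
    group
  right_inv p := by
    refine Prod.ext rfl (Subtype.ext ?_)
    refine Prod.ext rfl (Prod.ext ?_ rfl)
    show (p.1)⁻¹ * (p.1 * p.2.1.2.1) = p.2.1.2.1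
    group

noncomputable def aSig (p : TriE G H × TriE H K) : G × H :=
  if h : ∃ a : G × H, cj a (lhdOf s) = lhdOf p.1 then h.choose else 1

lemma aSig_spec {p : TriE G H × TriE H K} (h : ∃ a : G × H, cj a (lhdOf s) = lhdOf p.1) :
    cAct (aSig s p) s = p.1 := by
  apply lhd_inj
  rw [lhd_cAct, aSig, dif_pos h]
  exact h.choose_spec

noncomputable def bSig (p : TriE G H × TriE H K) : H × K :=
  if h : ∃ b : H × K, cj b (lhdOf t) = lhdOf p.2 then h.choose else 1

lemma bSig_spec {p : TriE G H × TriE H K} (h : ∃ b : H × K, cj b (lhdOf t) = lhdOf p.2) :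
    cAct (bSig t p) t = p.2 := by
  apply lhd_inj
  rw [lhd_cAct, bSig, dif_pos h]
  exact h.choose_spec

def psiF (x : (G × H) × (H × K)) : TriE G H × TriE H K := (cAct x.1 s, cAct x.2 t)

lemma psi_Pp {x : (G × H) × (H × K)} (hx : bigT s t r x) : Pp s t r (psiF s t x) := by
  refine ⟨?_, ?_, ⟨x.1, (lhd_cAct x.1 s).symm⟩, ⟨x.2, (lhd_cAct x.2 t).symm⟩⟩
  · show (cAct x.2 t).2.range = (cAct x.1 s).1
    rw [← map_fst_lhd (cAct x.2 t), lhd_cAct, hx.1, ← lhd_cAct]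
    exact map_snd_lhd (cAct x.1 s)
  · show lhdOf r = starSub (lhdOf (cAct x.1 s)) (lhdOf (cAct x.2 t))
    rw [lhd_cAct, lhd_cAct]
    exact hx.2

lemma bigT_of_Pp {p : TriE G H × TriE H K} (hp : Pp s t r p) {x : (G × H) × (H × K)}
    (h1 : cAct x.1 s = p.1) (h2 : cAct x.2 t = p.2) : bigT s t r x := by
  constructor
  · rw [← lhd_cAct, ← lhd_cAct, h1, h2, map_fst_lhd, map_snd_lhd, hp.1]
  · rw [← lhd_cAct, ← lhd_cAct, h1, h2]
    exact hp.2.1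

/-- `bigT ≃ P × Ns × Nt` -/
noncomputable def eq1 : {x : (G × H) × (H × K) // bigT s t r x}
    ≃ ({p : TriE G H × TriE H K // Pp s t r p}
        × ↥(Subgroup.normalizer (SetLike.coe (lhdOf s))) × ↥(Subgroup.normalizer (SetLike.coe (lhdOf t)))) where
  toFun x := (⟨psiF s t x.1, psi_Pp s t r x.2⟩,
    ⟨(aSig s (psiF s t x.1))⁻¹ * x.1.1, by
      rw [← cAct_eq_self_iff, cAct_mul]
      have h1 : cAct x.1.1 s = (psiF s t x.1).1 := rfl
      rw [h1, ← aSig_spec s (psi_Pp s t r x.2).2.2.1, ← cAct_mul, inv_mul_cancel, cAct_one]⟩,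
    ⟨(bSig t (psiF s t x.1))⁻¹ * x.1.2, by
      rw [← cAct_eq_self_iff, cAct_mul]
      have h1 : cAct x.1.2 t = (psiF s t x.1).2 := rfl
      rw [h1, ← bSig_spec t (psi_Pp s t r x.2).2.2.2, ← cAct_mul, inv_mul_cancel, cAct_one]⟩)
  invFun p := ⟨(aSig s (p.1 : TriE G H × TriE H K) * (p.2.1 : G × H),
      bSig t (p.1 : TriE G H × TriE H K) * (p.2.2 : H × K)), by
    have h1 : cAct (aSig s (p.1 : TriE G H × TriE H K) * (p.2.1 : G × H)) s
        = (p.1 : TriE G H × TriE H K).1 := by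
      rw [cAct_mul, cAct_eq_self_iff.mpr p.2.1.2, aSig_spec s p.1.2.2.2.1]
    have h2 : cAct (bSig t (p.1 : TriE G H × TriE H K) * (p.2.2 : H × K)) t
        = (p.1 : TriE G H × TriE H K).2 := by
      rw [cAct_mul, cAct_eq_self_iff.mpr p.2.2.2, bSig_spec t p.1.2.2.2.2]
    exact bigT_of_Pp s t r p.1.2 h1 h2⟩
  left_inv x := by
    apply Subtype.ext
    refine Prod.ext ?_ ?_
    · show aSig s (psiF s t x.1) * ((aSig s (psiF s t x.1))⁻¹ * x.1.1) = x.1.1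
      group
    · show bSig t (psiF s t x.1) * ((bSig t (psiF s t x.1))⁻¹ * x.1.2) = x.1.2
      group
  right_inv p := by
    have hΨ : psiF s t (aSig s (p.1 : TriE G H × TriE H K) * (p.2.1 : G × H),
        bSig t (p.1 : TriE G H × TriE H K) * (p.2.2 : H × K)) = (p.1 : TriE G H × TriE H K) := by
      refine Prod.ext ?_ ?_
      · show cAct (aSig s (p.1 : TriE G H × TriE H K) * (p.2.1 : G × H)) s
            = (p.1 : TriE G H × TriE H K).1
        rw [cAct_mul, cAct_eq_self_iff.mpr p.2.1.2, aSig_spec s p.1.2.2.2.1]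
      · show cAct (bSig t (p.1 : TriE G H × TriE H K) * (p.2.2 : H × K)) t
            = (p.1 : TriE G H × TriE H K).2
        rw [cAct_mul, cAct_eq_self_iff.mpr p.2.2.2, bSig_spec t p.1.2.2.2.2]
    refine Prod.ext (Subtype.ext hΨ) (Prod.ext (Subtype.ext ?_) (Subtype.ext ?_))
    · show (aSig s (psiF s t _))⁻¹ * (aSig s (p.1 : TriE G H × TriE H K) * (p.2.1 : G × H))
          = (p.2.1 : G × H)
      rw [hΨ]
      group
    · show (bSig t (psiF s t _))⁻¹ * (bSig t (p.1 : TriE G H × TriE H K) * (p.2.2 : H × K))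
          = (p.2.2 : H × K)
      rw [hΨ]
      group
end eq124

section count
variable {G H K : Type*} [Group G] [Group H] [Group K]
variable [Finite G] [Finite H] [Finite K]
variable (s : TriE G H) (t : TriE H K) (r : TriE G K)
variable (A : Finset G) (B : Finset H) (C : Finset K)

/-- the master counting identity: `|T'| ⬝ |C_H(V)| = |Rep| ⬝ |Ns| ⬝ |Nt|` -/
lemma master_count (hCh : isChoice s t A B C) (hV : t.2.range = s.1) :
    Nat.card {τ : G × H × K // Tp s t r τ}
        * Nat.card (Subgroup.centralizer ((s.1 : Subgroup H) : Set H))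
      = Nat.card {ρ : G × H × K // RepP s t r A B C ρ}
        * (Nat.card (Subgroup.normalizer (SetLike.coe (lhdOf s))) * Nat.card (Subgroup.normalizer (SetLike.coe (lhdOf t)))) := by
  have h1 := Nat.card_congr (eq3 s t r A B C hCh hV)
  have h2 := Nat.card_congr (eq4 s t r A B C)
  rw [Nat.card_prod] at h1
  rw [Nat.card_prod, Nat.card_prod] at h2
  rw [h1, h2]

lemma count_bigT1 :
    Nat.card {x : (G × H) × (H × K) // bigT s t r x}
      = Nat.card {p : TriE G H × TriE H K // Pp s t r p}
        * (Nat.card (Subgroup.normalizer (SetLike.coe (lhdOf s))) * Nat.card (Subgroup.normalizer (SetLike.coe (lhdOf t)))) := by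
  have h1 := Nat.card_congr (eq1 s t r)
  rw [Nat.card_prod, Nat.card_prod] at h1
  exact h1

lemma count_bigT2 (hV : t.2.range = s.1) :
    Nat.card {x : (G × H) × (H × K) // bigT s t r x}
      = Nat.card H * Nat.card {τ : G × H × K // Tp s t r τ} := by
  have h1 := Nat.card_congr (eq2 s t r hV)
  rw [Nat.card_prod] at h1
  exact h1

/-- combined: `|C_H(V)| ⬝ |P| = |H| ⬝ |Rep|` -/
lemma count_final (hCh : isChoice s t A B C) (hV : t.2.range = s.1) :
    Nat.card (Subgroup.centralizer ((s.1 : Subgroup H) : Set H))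
        * Nat.card {p : TriE G H × TriE H K // Pp s t r p}
      = Nat.card H * Nat.card {ρ : G × H × K // RepP s t r A B C ρ} := by
  have h1 := count_bigT1 s t r
  have h2 := count_bigT2 s t r hV
  have h3 := master_count s t r A B C hCh hV
  have hpos : 0 < Nat.card (Subgroup.normalizer (SetLike.coe (lhdOf s))) * Nat.card (Subgroup.normalizer (SetLike.coe (lhdOf t))) :=
    Nat.mul_pos Nat.card_pos Nat.card_pos
  apply Nat.eq_of_mul_eq_mul_right hpos
  calc Nat.card (Subgroup.centralizer ((s.1 : Subgroup H) : Set H))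
        * Nat.card {p : TriE G H × TriE H K // Pp s t r p}
        * (Nat.card (Subgroup.normalizer (SetLike.coe (lhdOf s))) * Nat.card (Subgroup.normalizer (SetLike.coe (lhdOf t))))
      = Nat.card (Subgroup.centralizer ((s.1 : Subgroup H) : Set H))
          * (Nat.card {p : TriE G H × TriE H K // Pp s t r p}
            * (Nat.card (Subgroup.normalizer (SetLike.coe (lhdOf s))) * Nat.card (Subgroup.normalizer (SetLike.coe (lhdOf t))))) := by ring
    _ = Nat.card (Subgroup.centralizer ((s.1 : Subgroup H) : Set H))
          * Nat.card {x : (G × H) × (H × K) // bigT s t r x} := by rw [h1]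
    _ = Nat.card (Subgroup.centralizer ((s.1 : Subgroup H) : Set H))
          * (Nat.card H * Nat.card {τ : G × H × K // Tp s t r τ}) := by rw [h2]
    _ = Nat.card H * (Nat.card {τ : G × H × K // Tp s t r τ}
          * Nat.card (Subgroup.centralizer ((s.1 : Subgroup H) : Set H))) := by ring
    _ = Nat.card H * (Nat.card {ρ : G × H × K // RepP s t r A B C ρ}
          * (Nat.card (Subgroup.normalizer (SetLike.coe (lhdOf s))) * Nat.card (Subgroup.normalizer (SetLike.coe (lhdOf t))))) := by rw [h3]
    _ = Nat.card H * Nat.card {ρ : G × H × K // RepP s t r A B C ρ}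
          * (Nat.card (Subgroup.normalizer (SetLike.coe (lhdOf s))) * Nat.card (Subgroup.normalizer (SetLike.coe (lhdOf t)))) := by ring

/-- `rhs9` counts `Rep` -/
lemma rhs9_eq_card :
    rhs9 s t A B C r = (Nat.card {ρ : G × H × K // RepP s t r A B C ρ} : ℚ) := by
  classical
  letI : Fintype (G × H × K) := Fintype.ofFinite _
  have h0 : rhs9 s t A B C r = ∑ z ∈ A ×ˢ (B ×ˢ C),
      if Fc s t r z.1 (z.2.1)⁻¹ z.2.2 then (1 : ℚ) else 0 := by
    rw [Finset.sum_product]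
    refine Finset.sum_congr rfl (fun g _ => ?_)
    rw [Finset.sum_product]
    rfl
  rw [h0, Finset.sum_boole]
  congr 1
  have h1 : (A ×ˢ (B ×ˢ C)).filter (fun z => Fc s t r z.1 (z.2.1)⁻¹ z.2.2)
      = Finset.univ.filter (fun z : G × H × K =>
          (z.1 ∈ A ∧ z.2.1 ∈ B ∧ z.2.2 ∈ C) ∧ Fc s t r z.1 (z.2.1)⁻¹ z.2.2) := by
    ext z
    simp [Finset.mem_product, and_assoc]
  rw [h1, ← Fintype.card_subtype]
  rw [← Nat.card_eq_fintype_card]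
  apply Nat.card_congr
  refine ⟨fun z => ⟨(z.1.1, (z.1.2.1)⁻¹, z.1.2.2), z.2.1.1, by
      rw [inv_inv]; exact z.2.1.2.1, z.2.1.2.2, z.2.2⟩,
    fun ρ => ⟨(ρ.1.1, (ρ.1.2.1)⁻¹, ρ.1.2.2), ⟨ρ.2.1, ρ.2.2.1, ρ.2.2.2.1⟩, by
      rw [inv_inv]; exact ρ.2.2.2.2⟩, ?_, ?_⟩
  · intro z
    apply Subtype.ext
    refine Prod.ext rfl (Prod.ext ?_ rfl)
    show ((z.1.2.1)⁻¹)⁻¹ = z.1.2.1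
    rw [inv_inv]
  · intro ρ
    apply Subtype.ext
    refine Prod.ext rfl (Prod.ext ?_ rfl)
    show ((ρ.1.2.1)⁻¹)⁻¹ = ρ.1.2.1
    rw [inv_inv]
end count

section sums
variable {G H K : Type*} [Group G] [Group H] [Group K]
variable [Finite G] [Finite H] [Finite K]
variable (s : TriE G H) (t : TriE H K) (r : TriE G K)

lemma orb_snd_card {s' : TriE G H} (h : ∃ a : G × H, cj a (lhdOf s) = lhdOf s') :
    Nat.card (Subgroup.centralizer ((s'.1 : Subgroup H) : Set H))
      = Nat.card (Subgroup.centralizer ((s.1 : Subgroup H) : Set H)) := by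
  obtain ⟨a, ha⟩ := h
  have h2 := congrArg (Subgroup.map (MonoidHom.snd G H)) ha
  rw [map_snd_cj, map_snd_lhd, map_snd_lhd] at h2
  rw [← h2, card_centralizer_cj]

lemma orbSum_eq (s' : TriE G H) :
    orbSum s s' = if (∃ a : G × H, cj a (lhdOf s) = lhdOf s') then (1 : ℚ) else 0 := rfl

/-- part (a): the orbit sums multiply to zero when the middle groups are not conjugate -/
lemma ghost_zero
    (hncj : ¬ ∃ h : H, Subgroup.map (MulAut.conj h).toMonoidHom s.1 = t.2.range) :
    ghostMul (orbSum s) (orbSum t) = 0 := by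
  classical
  letI : Fintype (TriE G H) := Fintype.ofFinite _
  letI : Fintype (TriE H K) := Fintype.ofFinite _
  funext r
  show (∑ᶠ (s' : TriE G H), ∑ᶠ (t' : TriE H K), _) = (0 : ℚ)
  rw [finsum_eq_sum_of_fintype]
  apply Finset.sum_eq_zero
  intro s' _
  rw [finsum_eq_sum_of_fintype]
  apply Finset.sum_eq_zero
  intro t' _
  by_cases h1 : t'.2.range = s'.1
  · rw [dif_pos h1]
    by_cases h2 : r = ⟨t'.1, s'.2.comp (t'.2.codRestrict s'.1
        (fun w => h1 ▸ MonoidHom.mem_range.mpr ⟨w, rfl⟩))⟩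
    · rw [if_pos h2]
      by_cases h3 : ∃ a : G × H, cj a (lhdOf s) = lhdOf s'
      · by_cases h4 : ∃ b : H × K, cj b (lhdOf t) = lhdOf t'
        · exfalso
          obtain ⟨a, ha⟩ := h3
          obtain ⟨b, hb⟩ := h4
          have e1 : cj a.2 s.1 = s'.1 := by
            have h5 := congrArg (Subgroup.map (MonoidHom.snd G H)) ha
            rwa [map_snd_cj, map_snd_lhd, map_snd_lhd] at h5
          have e2 : cj b.1 t.2.range = t'.2.range := by
            have h5 := congrArg (Subgroup.map (MonoidHom.fst H K)) hb
            rwa [map_fst_cj, map_fst_lhd, map_fst_lhd] at h5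
          have e3 : cj b.1 t.2.range = cj a.2 s.1 := by rw [e1, e2, h1]
          have e4 := congrArg (cj b.1⁻¹) e3
          rw [cj_cj, cj_cj, inv_mul_cancel, cj_one] at e4
          exact hncj ⟨b.1⁻¹ * a.2, e4.symm⟩
        · rw [orbSum_eq t t', if_neg h4]
          ring
      · rw [orbSum_eq s s', if_neg h3]
        ring
    · rw [if_neg h2]
  · rw [dif_neg h1]

/-- the product of orbit sums counts pairs -/
lemma ghost_eq :
    ghostMul (orbSum s) (orbSum t) r
      = ((Nat.card (Subgroup.centralizer ((s.1 : Subgroup H) : Set H)) : ℚ)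
          / (Nat.card H : ℚ))
        * (Nat.card {p : TriE G H × TriE H K // Pp s t r p} : ℚ) := by
  classical
  letI : Fintype (TriE G H) := Fintype.ofFinite _
  letI : Fintype (TriE H K) := Fintype.ofFinite _
  show (∑ᶠ (s' : TriE G H), ∑ᶠ (t' : TriE H K), _) = _
  rw [finsum_eq_sum_of_fintype]
  have hstep : ∀ s' : TriE G H, (∑ᶠ (t' : TriE H K),
      (if h : t'.2.range = s'.1 then
        (if r = ⟨t'.1, s'.2.comp (t'.2.codRestrict s'.1
              (fun w => h ▸ MonoidHom.mem_range.mpr ⟨w, rfl⟩))⟩ then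
          ((Nat.card ↥(Subgroup.centralizer ((s'.1 : Subgroup H) : Set H)) : ℚ) /
            (Nat.card H : ℚ)) * orbSum s s' * orbSum t t'
        else 0)
      else 0))
      = ∑ t' : TriE H K, (if Pp s t r (s', t') then
          ((Nat.card ↥(Subgroup.centralizer ((s.1 : Subgroup H) : Set H)) : ℚ) /
            (Nat.card H : ℚ)) else 0) := by
    intro s'
    rw [finsum_eq_sum_of_fintype]
    apply Finset.sum_congr rfl
    intro t' _
    by_cases h1 : t'.2.range = s'.1
    · rw [dif_pos h1]
      by_cases h3 : ∃ a : G × H, cj a (lhdOf s) = lhdOf s'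
      · by_cases h4 : ∃ b : H × K, cj b (lhdOf t) = lhdOf t'
        · by_cases h2 : r = ⟨t'.1, s'.2.comp (t'.2.codRestrict s'.1
              (fun w => h1 ▸ MonoidHom.mem_range.mpr ⟨w, rfl⟩))⟩
          · rw [if_pos h2]
            have hPp : Pp s t r (s', t') :=
              ⟨h1, by rw [h2]; exact (lhd_comp s' t' _).symm.symm, h3, h4⟩
            rw [if_pos hPp, orbSum_eq s s', if_pos h3, orbSum_eq t t', if_pos h4,
              orb_snd_card s h3]
            ring
          · rw [if_neg h2, if_neg]
            intro hPp
            exact h2 (lhd_inj (hPp.2.1.trans (lhd_comp s' t' _).symm))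
        · rw [if_neg (fun hPp : Pp s t r (s', t') => h4 hPp.2.2.2)]
          by_cases h2 : r = ⟨t'.1, s'.2.comp (t'.2.codRestrict s'.1
              (fun w => h1 ▸ MonoidHom.mem_range.mpr ⟨w, rfl⟩))⟩
          · rw [if_pos h2, orbSum_eq t t', if_neg h4]
            ring
          · rw [if_neg h2]
      · rw [if_neg (fun hPp : Pp s t r (s', t') => h3 hPp.2.2.1)]
        by_cases h2 : r = ⟨t'.1, s'.2.comp (t'.2.codRestrict s'.1
            (fun w => h1 ▸ MonoidHom.mem_range.mpr ⟨w, rfl⟩))⟩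
        · rw [if_pos h2, orbSum_eq s s', if_neg h3]
          ring
        · rw [if_neg h2]
    · rw [dif_neg h1, if_neg (fun hPp : Pp s t r (s', t') => h1 hPp.1)]
  rw [Finset.sum_congr rfl (fun s' _ => hstep s')]
  have hp : (∑ p : TriE G H × TriE H K, (if Pp s t r p then
      ((Nat.card ↥(Subgroup.centralizer ((s.1 : Subgroup H) : Set H)) : ℚ) /
        (Nat.card H : ℚ)) else 0))
      = ∑ s' : TriE G H, ∑ t' : TriE H K, (if Pp s t r (s', t') then
      ((Nat.card ↥(Subgroup.centralizer ((s.1 : Subgroup H) : Set H)) : ℚ) /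
        (Nat.card H : ℚ)) else 0) := Fintype.sum_prod_type _
  rw [← hp]
  have hconst : ∀ p : TriE G H × TriE H K, (if Pp s t r p then
      ((Nat.card ↥(Subgroup.centralizer ((s.1 : Subgroup H) : Set H)) : ℚ) /
        (Nat.card H : ℚ)) else 0)
      = ((Nat.card ↥(Subgroup.centralizer ((s.1 : Subgroup H) : Set H)) : ℚ) /
        (Nat.card H : ℚ)) * (if Pp s t r p then 1 else 0) := by
    intro p
    split <;> ring
  rw [Finset.sum_congr rfl (fun p _ => hconst p), ← Finset.mul_sum, Finset.sum_boole,
    ← Fintype.card_subtype, ← Nat.card_eq_fintype_card]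
end sums

section fin2
variable {G H K : Type*} [Group G] [Group H] [Group K]
variable [Finite G] [Finite H] [Finite K]
variable (s : TriE G H) (t : TriE H K)

lemma Tp_card_eq (r r' : TriE G K) (x : G × K)
    (hmap : Subgroup.map (MulAut.conj x).toMonoidHom (lhdOf r) = lhdOf r') :
    Nat.card {τ : G × H × K // Tp s t r τ} = Nat.card {τ : G × H × K // Tp s t r' τ} := by
  have hmap' : cj x (lhdOf r) = lhdOf r' := hmap
  have hback : lhdOf r = cj x⁻¹ (lhdOf r') := by
    rw [← hmap', cj_cj, inv_mul_cancel, cj_one]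
  apply Nat.card_congr
  refine ⟨fun τ => ⟨(x.1 * τ.1.1, τ.1.2.1, x.2 * τ.1.2.2), τ.2.1, ?_⟩,
    fun τ => ⟨(x.1⁻¹ * τ.1.1, τ.1.2.1, x.2⁻¹ * τ.1.2.2), τ.2.1, ?_⟩, ?_, ?_⟩
  · show lhdOf r' = cj ((x.1 * τ.1.1, x.2 * τ.1.2.2) : G × K) (Sn s t τ.1.2.1)
    have e : ((x.1 * τ.1.1, x.2 * τ.1.2.2) : G × K) = x * (τ.1.1, τ.1.2.2) := rfl
    rw [e, ← cj_cj, ← hmap']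
    have hF : lhdOf r = cj ((τ.1.1, τ.1.2.2) : G × K) (Sn s t τ.1.2.1) := τ.2.2
    rw [hF]
  · show lhdOf r = cj ((x.1⁻¹ * τ.1.1, x.2⁻¹ * τ.1.2.2) : G × K) (Sn s t τ.1.2.1)
    have e : ((x.1⁻¹ * τ.1.1, x.2⁻¹ * τ.1.2.2) : G × K) = x⁻¹ * (τ.1.1, τ.1.2.2) := rfl
    rw [e, ← cj_cj, hback]
    have hF : lhdOf r' = cj ((τ.1.1, τ.1.2.2) : G × K) (Sn s t τ.1.2.1) := τ.2.2
    rw [hF]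
  · intro τ
    apply Subtype.ext
    refine Prod.ext ?_ (Prod.ext rfl ?_)
    · show x.1⁻¹ * (x.1 * τ.1.1) = τ.1.1
      group
    · show x.2⁻¹ * (x.2 * τ.1.2.2) = τ.1.2.2
      group
  · intro τ
    apply Subtype.ext
    refine Prod.ext ?_ (Prod.ext rfl ?_)
    · show x.1 * (x.1⁻¹ * τ.1.1) = τ.1.1
      group
    · show x.2 * (x.2⁻¹ * τ.1.2.2) = τ.1.2.2
      group
end fin2


/-- the product formula for orbit sums in the ghost algebra.
(a) If `V = s.1` and `V' = t.2.range` are not `H`-conjugate then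
`[U,α,V]⁺ ·_H [V',β,W]⁺ = 0`.
(b) If `V = V'`, then for every admissible choice of transversals
`(𝒜, ℬ, 𝒞)` the product `[U,α,V]⁺ ·_H [V,β,W]⁺` equals
`Σ_{(g,h,k) ∈ 𝒜×ℬ×𝒞} ⁽ᵍ'ᵏ⁾(U, α∘c_{h⁻¹}∘β, W)`; moreover this sum is
independent of the choice of `(𝒜, ℬ, 𝒞)`, has integer coefficients and is
fixed by the `G × K`-action. -/
theorem stmt9 {G H K : Type*} [Group G] [Group H] [Group K]
    [Finite G] [Finite H] [Finite K] (s : TriE G H) (t : TriE H K) :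
    (¬ (∃ h : H, Subgroup.map (MulAut.conj h).toMonoidHom s.1 = t.2.range) →
      ghostMul (orbSum s) (orbSum t) = 0) ∧
    (t.2.range = s.1 →
      (∀ A B C, isChoice s t A B C →
        ghostMul (orbSum s) (orbSum t) = rhs9 s t A B C) ∧
      (∀ A B C A' B' C', isChoice s t A B C → isChoice s t A' B' C' →
        rhs9 s t A B C = rhs9 s t A' B' C') ∧
      (∀ A B C, isChoice s t A B C →
        (∀ r : TriE G K, ∃ n : ℤ, rhs9 s t A B C r = n) ∧
        (∀ (x : G × K) (r r' : TriE G K),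
          Subgroup.map (MulAut.conj x).toMonoidHom (lhdOf r) = lhdOf r' →
          rhs9 s t A B C r = rhs9 s t A B C r'))) := by
  constructor
  · exact ghost_zero s t
  · intro hV
    have hchpos : 0 < Nat.card H := Nat.card_pos
    refine ⟨?_, ?_, ?_⟩
    · intro A B C hCh
      funext r
      rw [ghost_eq s t r, rhs9_eq_card s t r A B C]
      have h := count_final s t r A B C hCh hV
      have hch : (Nat.card H : ℚ) ≠ 0 := Nat.cast_ne_zero.mpr hchpos.ne'
      rw [div_mul_eq_mul_div, div_eq_iff hch]
      have h' : ((Nat.card (Subgroup.centralizer ((s.1 : Subgroup H) : Set H))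
            * Nat.card {p : TriE G H × TriE H K // Pp s t r p} : ℕ) : ℚ)
          = ((Nat.card H * Nat.card {ρ : G × H × K // RepP s t r A B C ρ} : ℕ) : ℚ) := by
        exact_mod_cast congrArg (fun n : ℕ => (n : ℚ)) h
      push_cast at h'
      linarith
    · intro A B C A' B' C' h1 h2
      funext r
      rw [rhs9_eq_card s t r A B C, rhs9_eq_card s t r A' B' C']
      congr 1
      have e1 := count_final s t r A B C h1 hV
      have e2 := count_final s t r A' B' C' h2 hV
      exact Nat.eq_of_mul_eq_mul_left hchpos (e1.symm.trans e2)
    · intro A B C hCh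
      constructor
      · intro r
        refine ⟨(Nat.card {ρ : G × H × K // RepP s t r A B C ρ} : ℤ), ?_⟩
        rw [rhs9_eq_card s t r A B C]
        push_cast
        rfl
      · intro x r r' hmap
        rw [rhs9_eq_card s t r A B C, rhs9_eq_card s t r' A B C]
        congr 1
        have m1 := master_count s t r A B C hCh hV
        have m2 := master_count s t r' A B C hCh hV
        have hT := Tp_card_eq s t r r' x hmap
        have hpos : 0 < Nat.card (Subgroup.normalizer (SetLike.coe (lhdOf s))) * Nat.card (Subgroup.normalizer (SetLike.coe (lhdOf t))) :=
          Nat.mul_pos Nat.card_pos Nat.card_pos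
        apply Nat.eq_of_mul_eq_mul_right hpos
        rw [← m1, ← m2, hT]
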